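/- arXiv:2509.20763 — 11 statements merged into one kernel-verified Lean document; each statement's English description precedes it below -/
import Mathlib

section
/- For every finite simple graph G on n ≥ 1 vertices, 2√n ≤ αod(G) + χso(G) ≤ n + 1. -/
open Finset

section OddIndepDefs

variable {V : Type*} [Fintype V] [DecidableEq V]

/-- `S` is an odd independent set in `G`: `S` is independent and every vertex outside `S`
has either no neighbor in `S` or an odd number of neighbors in `S`. -/
def IsOddIndepSet (G : SimpleGraph V) [DecidableRel G.Adj] (S : Finset V) : Prop :=
  (∀ u ∈ S, ∀ v ∈ S, ¬ G.Adj u v) ∧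
  ∀ v ∉ S, (S.filter fun u => G.Adj v u) = ∅ ∨ Odd (S.filter fun u => G.Adj v u).card

/-- The odd independence number: the largest size of an odd independent set. -/
noncomputable def oddIndepNum (G : SimpleGraph V) [DecidableRel G.Adj] : ℕ :=
  sSup {k | ∃ S : Finset V, IsOddIndepSet G S ∧ S.card = k}

/-- The independence number: the largest size of an independent set. -/
noncomputable def indepNum (G : SimpleGraph V) : ℕ :=
  sSup {k | ∃ S : Finset V, (∀ u ∈ S, ∀ v ∈ S, ¬ G.Adj u v) ∧ S.card = k}

/-- A strong odd coloring with `n` colors: a proper coloring such that for every vertex `v`,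
every color appearing in the open neighborhood of `v` appears there an odd number of times. -/
def IsStrongOddColoring (G : SimpleGraph V) [DecidableRel G.Adj] {n : ℕ} (c : V → Fin n) : Prop :=
  (∀ u v, G.Adj u v → c u ≠ c v) ∧
  ∀ v : V, ∀ k : Fin n,
    (univ.filter fun u => G.Adj v u ∧ c u = k) = ∅ ∨
    Odd (univ.filter fun u => G.Adj v u ∧ c u = k).card

/-- The strong odd chromatic number: minimum number of colors of a strong odd coloring. -/
noncomputable def strongOddChromNum (G : SimpleGraph V) [DecidableRel G.Adj] : ℕ :=
  sInf {n | ∃ c : V → Fin n, IsStrongOddColoring G c}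

/-- The chromatic number, as a natural number. -/
noncomputable def chromNum (G : SimpleGraph V) : ℕ :=
  sInf {n | ∃ c : V → Fin n, ∀ u v, G.Adj u v → c u ≠ c v}

/-- The square of a graph: two distinct vertices are adjacent iff they are at distance at most 2,
i.e. adjacent or having a common neighbor. -/
def graphSquare (G : SimpleGraph V) : SimpleGraph V where
  Adj u v := u ≠ v ∧ (G.Adj u v ∨ ∃ w, G.Adj u w ∧ G.Adj w v)
  symm := by
    constructor
    intro u v h
    refine ⟨h.1.symm, ?_⟩
    rcases h.2 with h' | ⟨w, h1, h2⟩
    · exact Or.inl h'.symm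
    · exact Or.inr ⟨w, h2.symm, h1.symm⟩
  loopless := ⟨fun v h => h.1 rfl⟩

instance (G : SimpleGraph V) [DecidableRel G.Adj] : DecidableRel (graphSquare G).Adj :=
  fun u v => inferInstanceAs (Decidable (u ≠ v ∧ (G.Adj u v ∨ ∃ w, G.Adj u w ∧ G.Adj w v)))

end OddIndepDefs


section Aux

variable {V : Type*} [Fintype V] [DecidableEq V] (G : SimpleGraph V) [DecidableRel G.Adj]

lemma oddIndep_bddAbove :
    BddAbove {k | ∃ S : Finset V, IsOddIndepSet G S ∧ S.card = k} := by
  refine ⟨Fintype.card V, ?_⟩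
  rintro k ⟨S, _, rfl⟩
  exact S.card_le_univ

lemma oddIndep_nonempty :
    {k | ∃ S : Finset V, IsOddIndepSet G S ∧ S.card = k}.Nonempty := by
  refine ⟨0, ∅, ⟨?_, ?_⟩, rfl⟩
  · simp
  · intro v _
    left
    simp

lemma injective_isStrongOddColoring {n : ℕ} (c : V → Fin n) (hc : Function.Injective c) :
    IsStrongOddColoring G c := by
  constructor
  · intro u v hadj he
    exact G.ne_of_adj hadj (hc he)
  · intro v k
    have hsub : (univ.filter fun u => G.Adj v u ∧ c u = k).card ≤ 1 := by
      refine Finset.card_le_one.mpr ?_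
      intro a ha b hb
      simp only [mem_filter] at ha hb
      exact hc (ha.2.2.trans hb.2.2.symm)
    interval_cases h : (univ.filter fun u => G.Adj v u ∧ c u = k).card
    · exact Or.inl (Finset.card_eq_zero.mp h)
    · exact Or.inr odd_one

lemma strongOdd_set_nonempty :
    {n | ∃ c : V → Fin n, IsStrongOddColoring G c}.Nonempty := by
  refine ⟨Fintype.card V, (Fintype.equivFin V : V → Fin (Fintype.card V)), ?_⟩
  exact injective_isStrongOddColoring G _ (Fintype.equivFin V).injective

lemma strongOddChromNum_le (G : SimpleGraph V) [DecidableRel G.Adj] :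
    strongOddChromNum G ≤ Fintype.card V - oddIndepNum G + 1 := by
  obtain ⟨S, hS, hcard⟩ :
      ∃ S : Finset V, IsOddIndepSet G S ∧ S.card = oddIndepNum G :=
    Nat.sSup_mem (oddIndep_nonempty G) (oddIndep_bddAbove G)
  have hScard : (Sᶜ : Finset V).card = Fintype.card V - S.card := Finset.card_compl S
  have hcardcoe : Fintype.card (Sᶜ : Finset V) = Fintype.card V - S.card := by
    rw [Fintype.card_coe, hScard]
  let e : (Sᶜ : Finset V) ≃ Fin (Fintype.card V - S.card) :=
    Fintype.equivFinOfCardEq hcardcoe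
  let c : V → Fin (Fintype.card V - S.card + 1) := fun v =>
    if h : v ∈ S then 0 else (e ⟨v, Finset.mem_compl.mpr h⟩).succ
  have hc0 : ∀ v ∈ S, c v = 0 := fun v hv => dif_pos hv
  have hcn : ∀ v (hv : v ∉ S), c v = (e ⟨v, Finset.mem_compl.mpr hv⟩).succ :=
    fun v hv => dif_neg hv
  have hzero : ∀ v, c v = 0 ↔ v ∈ S := by
    intro v
    constructor
    · intro hv
      by_contra h
      rw [hcn v h] at hv
      exact Fin.succ_ne_zero _ hv
    · exact hc0 v
  have hcol : IsStrongOddColoring G c := by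
    constructor
    · intro u v hadj he
      by_cases hu : u ∈ S <;> by_cases hv : v ∈ S
      · exact hS.1 u hu v hv hadj
      · rw [hc0 u hu, hcn v hv] at he
        exact Fin.succ_ne_zero _ he.symm
      · rw [hcn u hu, hc0 v hv] at he
        exact Fin.succ_ne_zero _ he
      · rw [hcn u hu, hcn v hv] at he
        have := e.injective (Fin.succ_injective _ he)
        have : u = v := congrArg Subtype.val this
        exact G.ne_of_adj hadj this
    · intro v k
      refine Fin.cases ?_ ?_ k
      · -- color 0 : the class is S
        have heq : (univ.filter fun u => G.Adj v u ∧ c u = 0)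
            = S.filter fun u => G.Adj v u := by
          ext u
          simp only [mem_filter, mem_univ, true_and, hzero u]
          tauto
        rw [heq]
        by_cases hv : v ∈ S
        · left
          rw [Finset.filter_eq_empty_iff]
          intro u hu
          exact hS.1 v hv u hu
        · exact hS.2 v hv
      · intro j
        have hsub : (univ.filter fun u => G.Adj v u ∧ c u = Fin.succ j).card ≤ 1 := by
          refine Finset.card_le_one.mpr ?_
          intro a ha b hb
          simp only [mem_filter] at ha hb
          have hna : a ∉ S := by
            intro h
            rw [hc0 a h] at ha
            exact Fin.succ_ne_zero _ ha.2.2.symm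
          have hnb : b ∉ S := by
            intro h
            rw [hc0 b h] at hb
            exact Fin.succ_ne_zero _ hb.2.2.symm
          have := ha.2.2.trans hb.2.2.symm
          rw [hcn a hna, hcn b hnb] at this
          have := e.injective (Fin.succ_injective _ this)
          exact congrArg Subtype.val this
        interval_cases h : (univ.filter fun u => G.Adj v u ∧ c u = Fin.succ j).card
        · exact Or.inl (Finset.card_eq_zero.mp h)
        · exact Or.inr odd_one
  have hmem : Fintype.card V - S.card + 1 ∈
      {n | ∃ c : V → Fin n, IsStrongOddColoring G c} := ⟨c, hcol⟩
  have := Nat.sInf_le hmem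
  rwa [hcard] at this

lemma card_le_mul (G : SimpleGraph V) [DecidableRel G.Adj] :
    Fintype.card V ≤ strongOddChromNum G * oddIndepNum G := by
  obtain ⟨c, hc⟩ : ∃ c : V → Fin (strongOddChromNum G), IsStrongOddColoring G c :=
    Nat.sInf_mem (strongOdd_set_nonempty G)
  have hclass : ∀ k : Fin (strongOddChromNum G),
      (univ.filter fun u => c u = k).card ≤ oddIndepNum G := by
    intro k
    refine le_csSup (oddIndep_bddAbove G) ⟨univ.filter fun u => c u = k, ⟨?_, ?_⟩, rfl⟩
    · intro u hu v hv hadj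
      simp only [mem_filter] at hu hv
      exact hc.1 u v hadj (hu.2.trans hv.2.symm)
    · intro v _
      have heq : ((univ.filter fun u => c u = k).filter fun u => G.Adj v u)
          = univ.filter fun u => G.Adj v u ∧ c u = k := by
        ext u
        simp only [mem_filter, mem_univ, true_and]
        tauto
      rw [heq]
      exact hc.2 v k
  have hsum : Fintype.card V
      = ∑ k : Fin (strongOddChromNum G), (univ.filter fun u => c u = k).card := by
    rw [← Finset.card_univ]
    exact Finset.card_eq_sum_card_fiberwise fun x _ => mem_univ (c x)
  calc Fintype.card V
      = ∑ k : Fin (strongOddChromNum G), (univ.filter fun u => c u = k).card := hsum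
    _ ≤ ∑ _k : Fin (strongOddChromNum G), oddIndepNum G :=
        Finset.sum_le_sum fun k _ => hclass k
    _ = strongOddChromNum G * oddIndepNum G := by
        simp [Finset.sum_const, Finset.card_univ, mul_comm]

end Aux

/-- For every finite simple graph `G` on `n ≥ 1` vertices,
`2√n ≤ αod(G) + χso(G) ≤ n + 1`. -/
theorem oddIndepNum_add_strongOddChromNum_bounds
    {V : Type*} [Fintype V] [DecidableEq V] (G : SimpleGraph V) [DecidableRel G.Adj]
    (hn : 1 ≤ Fintype.card V) :
    2 * Real.sqrt (Fintype.card V) ≤ (oddIndepNum G + strongOddChromNum G : ℝ) ∧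
    oddIndepNum G + strongOddChromNum G ≤ Fintype.card V + 1 := by
  set α := oddIndepNum G with hα
  set χ := strongOddChromNum G with hχ
  have hαle : α ≤ Fintype.card V := by
    obtain ⟨S, _, hcard⟩ :
        ∃ S : Finset V, IsOddIndepSet G S ∧ S.card = α :=
      Nat.sSup_mem (oddIndep_nonempty G) (oddIndep_bddAbove G)
    rw [← hcard]; exact S.card_le_univ
  have hmul : Fintype.card V ≤ χ * α := card_le_mul G
  constructor
  · -- lower bound
    have hmulR : (Fintype.card V : ℝ) ≤ (χ : ℝ) * α := by exact_mod_cast hmul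
    have h4 : (4 : ℝ) * Fintype.card V ≤ ((α : ℝ) + χ) ^ 2 := by
      nlinarith [sq_nonneg ((α : ℝ) - χ)]
    calc 2 * Real.sqrt (Fintype.card V)
        = Real.sqrt (4 * Fintype.card V) := by
          rw [show (4 : ℝ) * Fintype.card V = (2 : ℝ) ^ 2 * Fintype.card V by ring,
            Real.sqrt_mul (by positivity), Real.sqrt_sq (by norm_num)]
      _ ≤ Real.sqrt (((α : ℝ) + χ) ^ 2) := Real.sqrt_le_sqrt h4
      _ = (α : ℝ) + χ := Real.sqrt_sq (by positivity)
  · -- upper bound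
    have := strongOddChromNum_le G
    omega
end

section
/- For every finite simple graph G, the odd independence number of G is at least the independence number of the square of G: αod(G) ≥ α(G²). -/
open Finset

/-- For every finite simple graph `G`, `αod(G) ≥ α(G²)`. -/
theorem indepNum_graphSquare_le_oddIndepNum
    {V : Type*} [Fintype V] [DecidableEq V] (G : SimpleGraph V) [DecidableRel G.Adj] :
    indepNum (graphSquare G) ≤ oddIndepNum G := by
  apply csSup_le'
  rintro k ⟨S, hS, rfl⟩
  have hodd : IsOddIndepSet G S := by
    constructor
    · intro u hu v hv hadj
      exact hS u hu v hv ⟨G.ne_of_adj hadj, Or.inl hadj⟩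
    · intro v hv
      by_cases hne : (S.filter fun u => G.Adj v u) = ∅
      · exact Or.inl hne
      · right
        obtain ⟨u, hu⟩ := Finset.nonempty_iff_ne_empty.2 hne
        have hcard : (S.filter fun u => G.Adj v u) = {u} := by
          apply Finset.eq_singleton_iff_unique_mem.2
          refine ⟨hu, fun w hw => ?_⟩
          simp only [Finset.mem_filter] at hu hw
          by_contra hwu
          exact hS w hw.1 u hu.1 ⟨hwu, Or.inr ⟨v, hw.2.symm, hu.2⟩⟩
        rw [hcard]
        simp
  have hbdd : BddAbove {k | ∃ S : Finset V, IsOddIndepSet G S ∧ S.card = k} := by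
    refine ⟨Fintype.card V, ?_⟩
    rintro k ⟨T, _, rfl⟩
    exact T.card_le_univ.trans_eq (Finset.card_univ)
  exact le_csSup hbdd ⟨S, hodd, rfl⟩
end

section
/- For every finite simple graph G with vertex set V, the odd independence number satisfies αod(G) ≥ Σ_{v∈V} 1/(deg_{G²}(v) + 1), where deg_{G²}(v) is the degree of v in the square of G. -/
open Finset

section CaroWei

variable {V : Type*} [Fintype V] [DecidableEq V]

open Finset

private noncomputable def permSet (H : SimpleGraph V) [DecidableRel H.Adj] (v : V) :
    Finset (V ≃ Fin (Fintype.card V)) :=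
  univ.filter fun σ => ∀ u, H.Adj v u → σ v < σ u

private noncomputable def goodSet (H : SimpleGraph V) [DecidableRel H.Adj]
    (σ : V ≃ Fin (Fintype.card V)) : Finset V :=
  univ.filter fun v => ∀ u, H.Adj v u → σ v < σ u

private lemma swap_mem_aux (N : Finset V) (a b : V) (ha : a ∈ N) (hb : b ∈ N)
    (σ : V ≃ Fin (Fintype.card V)) (hσ : ∀ u ∈ N, u ≠ a → σ a < σ u) :
    ∀ u ∈ N, u ≠ b → ((Equiv.swap a b).trans σ) b < ((Equiv.swap a b).trans σ) u := by
  intro u hu hub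
  simp only [Equiv.trans_apply, Equiv.swap_apply_right]
  by_cases hua : u = a
  · subst hua
    rw [Equiv.swap_apply_left]
    exact hσ b hb (fun h => hub h.symm)
  · rw [Equiv.swap_apply_of_ne_of_ne hua hub]
    exact hσ u hu hua

private lemma count_perm (N : Finset V) (v : V) (hv : v ∈ N) :
    (univ : Finset (V ≃ Fin (Fintype.card V))).card
      = N.card *
        (univ.filter fun σ : V ≃ Fin (Fintype.card V) =>
          ∀ u ∈ N, u ≠ v → σ v < σ u).card := by
  classical
  set B : V → Finset (V ≃ Fin (Fintype.card V)) :=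
    fun w => univ.filter fun σ => ∀ u ∈ N, u ≠ w → σ w < σ u with hB
  have hcover : N.biUnion B = univ := by
    apply Finset.eq_univ_of_forall
    intro σ
    obtain ⟨w, hw, hmin⟩ := Finset.exists_min_image N (fun u => σ u) ⟨v, hv⟩
    refine Finset.mem_biUnion.2 ⟨w, hw, ?_⟩
    simp only [hB, Finset.mem_filter, Finset.mem_univ, true_and]
    intro u hu hne
    exact (hmin u hu).lt_of_ne (fun h => hne (σ.injective h).symm)
  have hdisj : ∀ w ∈ N, ∀ w' ∈ N, w ≠ w' → Disjoint (B w) (B w') := by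
    intro w hw w' hw' hne
    rw [Finset.disjoint_left]
    intro σ h1 h2
    simp only [hB, Finset.mem_filter, Finset.mem_univ, true_and] at h1 h2
    exact absurd (h2 w hw hne) (not_lt.2 (h1 w' hw' hne.symm).le)
  have hcard : ∀ w ∈ N, (B w).card = (B v).card := by
    intro w hw
    apply Finset.card_bij' (fun σ _ => (Equiv.swap w v).trans σ)
      (fun σ _ => (Equiv.swap w v).trans σ)
    · intro σ hσ
      simp only [hB, Finset.mem_filter, Finset.mem_univ, true_and] at hσ ⊢
      exact swap_mem_aux N w v hw hv σ hσ
    · intro σ hσ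
      simp only [hB, Finset.mem_filter, Finset.mem_univ, true_and] at hσ ⊢
      have := swap_mem_aux N v w hv hw σ hσ
      rwa [Equiv.swap_comm] at this
    · intro σ _
      ext x
      simp [Equiv.swap_apply_self]
    · intro σ _
      ext x
      simp [Equiv.swap_apply_self]
  calc (univ : Finset (V ≃ Fin (Fintype.card V))).card
      = (N.biUnion B).card := by rw [hcover]
    _ = ∑ w ∈ N, (B w).card := Finset.card_biUnion hdisj
    _ = ∑ _w ∈ N, (B v).card := Finset.sum_congr rfl hcard
    _ = N.card * (B v).card := by rw [Finset.sum_const, smul_eq_mul]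

private lemma permSet_card (H : SimpleGraph V) [DecidableRel H.Adj] (v : V) :
    (univ : Finset (V ≃ Fin (Fintype.card V))).card
      = (H.degree v + 1) * (permSet H v).card := by
  classical
  have h := count_perm (insert v (H.neighborFinset v)) v (Finset.mem_insert_self _ _)
  have hcard : (insert v (H.neighborFinset v)).card = H.degree v + 1 := by
    rw [Finset.card_insert_of_notMem (by simp), SimpleGraph.card_neighborFinset_eq_degree]
  have hset : (univ.filter fun σ : V ≃ Fin (Fintype.card V) =>
      ∀ u ∈ insert v (H.neighborFinset v), u ≠ v → σ v < σ u) = permSet H v := by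
    apply Finset.filter_congr
    intro σ _
    simp only [Finset.mem_insert, SimpleGraph.mem_neighborFinset]
    constructor
    · intro h' u hadj
      exact h' u (Or.inr hadj) (fun he => H.loopless.irrefl v (he ▸ hadj))
    · intro h' u hu hne
      rcases hu with rfl | hadj
      · exact absurd rfl hne
      · exact h' u hadj
  rw [h, hcard, hset]

private lemma goodSet_indep (H : SimpleGraph V) [DecidableRel H.Adj]
    (σ : V ≃ Fin (Fintype.card V)) :
    ∀ u ∈ goodSet H σ, ∀ w ∈ goodSet H σ, ¬ H.Adj u w := by
  intro u hu w hw hadj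
  simp only [goodSet, Finset.mem_filter, Finset.mem_univ, true_and] at hu hw
  exact absurd (hu w hadj) (not_lt.2 (hw u hadj.symm).le)

end CaroWei


/-- For every finite simple graph `G` with vertex set `V`,
`αod(G) ≥ Σ_{v ∈ V} 1/(deg_{G²}(v) + 1)`. -/
theorem sum_inv_degree_graphSquare_add_one_le_oddIndepNum
    {V : Type*} [Fintype V] [DecidableEq V] (G : SimpleGraph V) [DecidableRel G.Adj] :
    ∑ v : V, (1 : ℝ) / ((graphSquare G).degree v + 1) ≤ (oddIndepNum G : ℝ) := by
  classical
  set H := graphSquare G with hHdef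
  set n := Fintype.card V with hn
  set Ω : Finset (V ≃ Fin n) := univ with hΩ
  have hΩne : Ω.Nonempty := ⟨Fintype.equivFin V, Finset.mem_univ _⟩
  have hΩpos : (0:ℝ) < Ω.card := by exact_mod_cast Finset.card_pos.2 hΩne
  -- each goodSet is an odd independent set of G
  have hodd : ∀ σ : V ≃ Fin n, IsOddIndepSet G (goodSet H σ) := by
    intro σ
    have hind := goodSet_indep H σ
    constructor
    · intro u hu w hw hadj
      exact hind u hu w hw (show u ≠ w ∧ (G.Adj u w ∨ ∃ x, G.Adj u x ∧ G.Adj x w) from ⟨hadj.ne, Or.inl hadj⟩)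
    · intro v hv
      have hle : ((goodSet H σ).filter fun u => G.Adj v u).card ≤ 1 := by
        by_contra hgt
        push_neg at hgt
        obtain ⟨a, b, ha, hb, hab⟩ := Finset.one_lt_card_iff.1 hgt
        rw [Finset.mem_filter] at ha hb
        exact hind a ha.1 b hb.1 (show a ≠ b ∧ (G.Adj a b ∨ ∃ x, G.Adj a x ∧ G.Adj x b) from ⟨hab, Or.inr ⟨v, ha.2.symm, hb.2⟩⟩)
      rcases Nat.le_one_iff_eq_zero_or_eq_one.1 hle with h0 | h1
      · exact Or.inl (Finset.card_eq_zero.1 h0)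
      · exact Or.inr (h1 ▸ odd_one)
  -- the odd independence number bounds every goodSet
  have hbdd : BddAbove {k | ∃ S : Finset V, IsOddIndepSet G S ∧ S.card = k} := by
    refine ⟨Fintype.card V, fun k hk => ?_⟩
    obtain ⟨S, _, rfl⟩ := hk
    exact Finset.card_le_univ S
  have hle : ∀ σ : V ≃ Fin n, (goodSet H σ).card ≤ oddIndepNum G := by
    intro σ
    exact le_csSup hbdd ⟨goodSet H σ, hodd σ, rfl⟩
  -- double counting
  have hdouble : ∑ v : V, (permSet H v).card = ∑ σ ∈ Ω, (goodSet H σ).card := by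
    simp only [permSet, goodSet, Finset.card_filter]
    rw [Finset.sum_comm]
  -- per-vertex identity
  have hvert : ∀ v : V, (1:ℝ) / (H.degree v + 1) = (permSet H v).card / Ω.card := by
    intro v
    have h := permSet_card H v
    have : (Ω.card : ℝ) = (H.degree v + 1) * (permSet H v).card := by exact_mod_cast h
    rw [this]
    have hpos : (0:ℝ) < (H.degree v : ℝ) + 1 := by positivity
    have hp2 : (0:ℝ) < ((H.degree v : ℝ) + 1) * (permSet H v).card := by
      rw [← this]; exact hΩpos
    have hq : (0:ℝ) < ((permSet H v).card : ℝ) := by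
      by_contra hq
      push_neg at hq
      nlinarith
    field_simp
  calc ∑ v : V, (1:ℝ) / (H.degree v + 1)
      = ∑ v : V, ((permSet H v).card : ℝ) / Ω.card := by
        exact Finset.sum_congr rfl (fun v _ => hvert v)
    _ = (∑ v : V, ((permSet H v).card : ℝ)) / Ω.card := by rw [Finset.sum_div]
    _ = (∑ σ ∈ Ω, ((goodSet H σ).card : ℝ)) / Ω.card := by
        congr 1
        exact_mod_cast (by exact_mod_cast congrArg (Nat.cast (R := ℝ)) hdouble : _)
    _ ≤ (∑ _σ ∈ Ω, (oddIndepNum G : ℝ)) / Ω.card := by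
        gcongr
        exact_mod_cast hle _
    _ = (oddIndepNum G : ℝ) := by
        rw [Finset.sum_const, nsmul_eq_mul]
        field_simp
end

section
/- If G is a finite d-regular bipartite simple graph on n vertices with d odd, then αod(G) = α(G) = n/2, i.e. 2·αod(G) = n and 2·α(G) = n. -/
open Finset

/-- If `G` is a finite `d`-regular bipartite simple graph on `n` vertices with
`d` odd, then `αod(G) = α(G) = n/2`, i.e. `2·αod(G) = n` and `2·α(G) = n`. -/
theorem oddIndepNum_eq_half_card_of_regular_bipartite_odd
    {V : Type*} [Fintype V] [DecidableEq V]
    (G : SimpleGraph V) [DecidableRel G.Adj] (d : ℕ) (hd : Odd d)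
    (hreg : G.IsRegularOfDegree d) (hbip : G.Colorable 2) :
    2 * oddIndepNum G = Fintype.card V ∧ 2 * indepNum G = Fintype.card V := by
  classical
  obtain ⟨C⟩ := hbip
  have hd0 : 0 < d := hd.pos
  set A : Finset V := univ.filter (fun v => C v = 0) with hA
  have hmemA : ∀ v : V, v ∈ A ↔ C v = 0 := by
    intro v; simp [hA]
  have hnotA : ∀ v : V, v ∉ A ↔ C v = 1 := by
    intro v
    rw [hmemA]
    constructor
    · intro h; omega
    · intro h; omega
  -- neighbors of a vertex in A lie outside A, and vice versa
  have hnbrA : ∀ v ∈ A, (Aᶜ.filter (G.Adj v)) = G.neighborFinset v := by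
    intro v hv
    ext w
    simp only [Finset.mem_filter, Finset.mem_compl, SimpleGraph.mem_neighborFinset]
    constructor
    · exact fun h => h.2
    · intro h
      refine ⟨?_, h⟩
      rw [hnotA]
      have := C.valid h
      rw [(hmemA v).1 hv] at this
      omega
  have hnbrAc : ∀ v ∉ A, (A.filter (G.Adj v)) = G.neighborFinset v := by
    intro v hv
    ext w
    simp only [Finset.mem_filter, SimpleGraph.mem_neighborFinset]
    constructor
    · exact fun h => h.2
    · intro h
      refine ⟨?_, h⟩
      rw [hmemA]
      have := C.valid h
      rw [(hnotA v).1 hv] at this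
      omega
  -- double counting: d * |A| = d * |Aᶜ|
  have hswap : ∀ S : Finset V,
      (∑ v ∈ S, (Sᶜ.filter (G.Adj v)).card) = ∑ w ∈ Sᶜ, (S.filter (G.Adj w)).card := by
    intro S
    simp only [Finset.card_filter]
    rw [Finset.sum_comm]
    refine Finset.sum_congr rfl fun w _ => Finset.sum_congr rfl fun v _ => ?_
    simp [G.adj_comm]
  have hAsum : (∑ v ∈ A, (Aᶜ.filter (G.Adj v)).card) = d * A.card := by
    rw [Finset.sum_congr rfl fun v hv => by rw [hnbrA v hv]]
    simp [SimpleGraph.card_neighborFinset_eq_degree, hreg _, mul_comm]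
  have hAcsum : (∑ w ∈ Aᶜ, (A.filter (G.Adj w)).card) = d * Aᶜ.card := by
    rw [Finset.sum_congr rfl fun w hw => by rw [hnbrAc w (Finset.mem_compl.mp hw)]]
    simp [SimpleGraph.card_neighborFinset_eq_degree, hreg _, mul_comm]
  have hAcard : 2 * A.card = Fintype.card V := by
    have h1 : d * A.card = d * Aᶜ.card := by rw [← hAsum, ← hAcsum, hswap]
    have h2 : A.card = Aᶜ.card := Nat.eq_of_mul_eq_mul_left hd0 h1
    have h3 := Finset.card_add_card_compl A
    omega
  -- upper bound for any independent set
  have hub : ∀ S : Finset V, (∀ u ∈ S, ∀ v ∈ S, ¬ G.Adj u v) →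
      2 * S.card ≤ Fintype.card V := by
    intro S hS
    have e1 : (∑ v ∈ S, (Sᶜ.filter (G.Adj v)).card) = d * S.card := by
      have : ∀ v ∈ S, (Sᶜ.filter (G.Adj v)) = G.neighborFinset v := by
        intro v hv
        ext w
        simp only [Finset.mem_filter, Finset.mem_compl, SimpleGraph.mem_neighborFinset]
        constructor
        · exact fun h => h.2
        · intro h
          exact ⟨fun hw => hS v hv w hw h, h⟩
      rw [Finset.sum_congr rfl fun v hv => by rw [this v hv]]
      simp [SimpleGraph.card_neighborFinset_eq_degree, hreg _, mul_comm]
    have e2 : (∑ w ∈ Sᶜ, (S.filter (G.Adj w)).card) ≤ d * Sᶜ.card := by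
      rw [mul_comm, ← Finset.sum_const_nat (m := d) fun _ _ => rfl]
      refine Finset.sum_le_sum fun w _ => ?_
      have : (S.filter (G.Adj w)) ⊆ G.neighborFinset w := by
        intro x hx
        simp only [Finset.mem_filter] at hx
        simp [hx.2]
      calc (S.filter (G.Adj w)).card ≤ (G.neighborFinset w).card := Finset.card_le_card this
        _ = d := hreg w
    have h1 : d * S.card ≤ d * Sᶜ.card := by
      rw [← e1]; rw [hswap S]; exact e2
    have h2 : S.card ≤ Sᶜ.card := Nat.le_of_mul_le_mul_left h1 hd0
    have h3 := Finset.card_add_card_compl S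
    omega
  -- A is independent
  have hAindep : ∀ u ∈ A, ∀ v ∈ A, ¬ G.Adj u v := by
    intro u hu v hv hadj
    have := C.valid hadj
    rw [(hmemA u).1 hu, (hmemA v).1 hv] at this
    exact this rfl
  -- A is an odd independent set
  have hAodd : IsOddIndepSet G A := by
    refine ⟨hAindep, fun v hv => ?_⟩
    right
    rw [hnbrAc v hv]
    rw [show (G.neighborFinset v).card = d from hreg v]
    exact hd
  -- bounds on the sSup sets
  have hbddO : BddAbove {k | ∃ S : Finset V, IsOddIndepSet G S ∧ S.card = k} := by
    refine ⟨Fintype.card V, fun k hk => ?_⟩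
    obtain ⟨S, _, rfl⟩ := hk
    exact Finset.card_le_univ S
  have hbddI : BddAbove {k | ∃ S : Finset V,
      (∀ u ∈ S, ∀ v ∈ S, ¬ G.Adj u v) ∧ S.card = k} := by
    refine ⟨Fintype.card V, fun k hk => ?_⟩
    obtain ⟨S, _, rfl⟩ := hk
    exact Finset.card_le_univ S
  have hmemO : A.card ∈ {k | ∃ S : Finset V, IsOddIndepSet G S ∧ S.card = k} :=
    ⟨A, hAodd, rfl⟩
  have hmemI : A.card ∈ {k | ∃ S : Finset V,
      (∀ u ∈ S, ∀ v ∈ S, ¬ G.Adj u v) ∧ S.card = k} := ⟨A, hAindep, rfl⟩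
  have hloO : A.card ≤ oddIndepNum G := le_csSup hbddO hmemO
  have hloI : A.card ≤ indepNum G := le_csSup hbddI hmemI
  have hhiO : 2 * oddIndepNum G ≤ Fintype.card V := by
    obtain ⟨S, hSo, hSc⟩ := Nat.sSup_mem ⟨A.card, hmemO⟩ hbddO
    rw [oddIndepNum, ← hSc]
    exact hub S hSo.1
  have hhiI : 2 * indepNum G ≤ Fintype.card V := by
    obtain ⟨S, hSo, hSc⟩ := Nat.sSup_mem ⟨A.card, hmemI⟩ hbddI
    rw [indepNum, ← hSc]
    exact hub S hSo
  unfold oddIndepNum indepNum at *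
  omega
end

section
/- Let G be a finite Δ-regular simple graph on n vertices in which every two adjacent vertices have at least λ common neighbors. If Δ − λ is even, then (2Δ − λ − 1)·αod(G) ≤ (Δ − λ − 1)·n; if Δ − λ is odd, then (2Δ − λ)·αod(G) ≤ (Δ − λ)·n. -/
open Finset

section AuxLemmas

variable {V : Type*} [Fintype V] [DecidableEq V]

lemma keySum (G : SimpleGraph V) [DecidableRel G.Adj] {D : ℕ}
    (hreg : G.IsRegularOfDegree D) (S : Finset V)
    (hind : ∀ u ∈ S, ∀ v ∈ S, ¬ G.Adj u v) :
    ∑ v ∈ Sᶜ, (S.filter fun u => G.Adj v u).card = D * S.card := by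
  have h1 : ∑ v ∈ (univ : Finset V), (S.filter fun u => G.Adj v u).card = D * S.card := by
    simp only [Finset.card_filter]
    rw [Finset.sum_comm]
    have h : ∀ u ∈ S, (∑ v ∈ (univ : Finset V), if G.Adj v u then 1 else 0) = D := by
      intro u hu
      rw [← Finset.card_filter]
      have hd := hreg u
      rw [← hd, ← SimpleGraph.card_neighborFinset_eq_degree]
      congr 1
      ext w
      simp [SimpleGraph.mem_neighborFinset, G.adj_comm]
    rw [Finset.sum_congr rfl h]
    simp [mul_comm]
  rw [← h1]
  apply Finset.sum_subset (Finset.subset_univ _)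
  intro v _ hv
  simp only [Finset.mem_compl, not_not] at hv
  rw [Finset.card_eq_zero, Finset.filter_eq_empty_iff]
  intro u hu
  exact fun h => hind v hv u hu h

lemma keyVert (G : SimpleGraph V) [DecidableRel G.Adj] {D lam : ℕ}
    (hreg : G.IsRegularOfDegree D)
    (hcommon : ∀ x y : V, G.Adj x y →
      lam ≤ (Finset.univ.filter fun w => G.Adj x w ∧ G.Adj y w).card)
    (S : Finset V) (hind : ∀ u ∈ S, ∀ v ∈ S, ¬ G.Adj u v)
    (v : V) (hne : (S.filter fun u => G.Adj v u).Nonempty) :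
    (S.filter fun u => G.Adj v u).card + lam ≤ D := by
  obtain ⟨u, hu⟩ := hne
  simp only [Finset.mem_filter] at hu
  have hlam := hcommon v u hu.2
  set A := S.filter fun u => G.Adj v u with hA
  set W := univ.filter fun w => G.Adj v w ∧ G.Adj u w with hW
  have hdisj : Disjoint A W := by
    rw [Finset.disjoint_left]
    intro w hwA hwW
    rw [hA, Finset.mem_filter] at hwA
    rw [hW, Finset.mem_filter] at hwW
    exact hind u hu.1 w hwA.1 hwW.2.2
  have hsub : A ∪ W ⊆ G.neighborFinset v := by
    intro w hw
    rw [SimpleGraph.mem_neighborFinset]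
    rcases Finset.mem_union.1 hw with h | h
    · exact (Finset.mem_filter.1 h).2
    · exact (Finset.mem_filter.1 h).2.1
  have hc := Finset.card_le_card hsub
  rw [Finset.card_union_of_disjoint hdisj, SimpleGraph.card_neighborFinset_eq_degree,
    hreg v] at hc
  omega

lemma keyBound (G : SimpleGraph V) [DecidableRel G.Adj] {D b : ℕ}
    (hreg : G.IsRegularOfDegree D) (S : Finset V)
    (hS : IsOddIndepSet G S)
    (hb : ∀ v ∉ S, Odd (S.filter fun u => G.Adj v u).card →
      (S.filter fun u => G.Adj v u).card ≤ b) :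
    (D + b) * S.card ≤ b * Fintype.card V := by
  have hsum := keySum G hreg S hS.1
  have h2 : ∑ v ∈ Sᶜ, (S.filter fun u => G.Adj v u).card ≤ Sᶜ.card * b := by
    rw [← smul_eq_mul]
    apply Finset.sum_le_card_nsmul
    intro v hv
    rw [Finset.mem_compl] at hv
    rcases hS.2 v hv with h | h
    · rw [h]; simp
    · exact hb v hv h
  rw [hsum, Finset.card_compl] at h2
  have h4 : S.card ≤ Fintype.card V := Finset.card_le_univ S
  calc (D + b) * S.card = D * S.card + b * S.card := by ring
    _ ≤ (Fintype.card V - S.card) * b + b * S.card := by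
        exact Nat.add_le_add_right h2 _
    _ = b * ((Fintype.card V - S.card) + S.card) := by ring
    _ = b * Fintype.card V := by rw [Nat.sub_add_cancel h4]

end AuxLemmas


/-- Let `G` be a finite `Δ`-regular simple graph on `n` vertices in which every
two adjacent vertices have at least `λ` common neighbors. If `Δ − λ` is even, then
`(2Δ − λ − 1)·αod(G) ≤ (Δ − λ − 1)·n`; if `Δ − λ` is odd, then `(2Δ − λ)·αod(G) ≤ (Δ − λ)·n`. -/
theorem oddIndepNum_le_of_regular_common_neighbors
    {V : Type*} [Fintype V] [DecidableEq V]
    (G : SimpleGraph V) [DecidableRel G.Adj] (D lam : ℕ)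
    (hreg : G.IsRegularOfDegree D)
    (hcommon : ∀ x y : V, G.Adj x y →
      lam ≤ (Finset.univ.filter fun w => G.Adj x w ∧ G.Adj y w).card) :
    (Even (D - lam) →
      (2 * D - lam - 1) * oddIndepNum G ≤ (D - lam - 1) * Fintype.card V) ∧
    (Odd (D - lam) →
      (2 * D - lam) * oddIndepNum G ≤ (D - lam) * Fintype.card V) := by
  -- the set of achievable cardinalities is nonempty and bounded above
  have hne : {k | ∃ S : Finset V, IsOddIndepSet G S ∧ S.card = k}.Nonempty := by
    refine ⟨0, ∅, ⟨?_, ?_⟩, rfl⟩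
    · intro u hu; simp at hu
    · intro v _; left; simp
  have hbdd : BddAbove {k | ∃ S : Finset V, IsOddIndepSet G S ∧ S.card = k} := by
    refine ⟨Fintype.card V, ?_⟩
    rintro k ⟨S, _, rfl⟩
    exact Finset.card_le_univ S
  obtain ⟨S, hS, hcard⟩ := Nat.sSup_mem hne hbdd
  rw [oddIndepNum, ← hcard]
  have hvert : ∀ v ∉ S, Odd (S.filter fun u => G.Adj v u).card →
      (S.filter fun u => G.Adj v u).card + lam ≤ D ∧
      1 ≤ (S.filter fun u => G.Adj v u).card := by
    intro v hv hodd
    have hpos : 0 < (S.filter fun u => G.Adj v u).card := hodd.pos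
    refine ⟨keyVert G hreg hcommon S hS.1 v (Finset.card_pos.1 hpos), hpos⟩
  constructor
  · intro heven
    obtain ⟨m, hm⟩ := heven
    have hkb : (D + (D - lam - 1)) * S.card ≤ (D - lam - 1) * Fintype.card V := by
      apply keyBound G hreg S hS
      intro v hv hodd
      obtain ⟨hle, hpos⟩ := hvert v hv hodd
      obtain ⟨k, hk⟩ := hodd
      omega
    calc (2 * D - lam - 1) * S.card ≤ (D + (D - lam - 1)) * S.card := by
          apply Nat.mul_le_mul_right
          omega
      _ ≤ (D - lam - 1) * Fintype.card V := hkb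
  · intro hodd'
    have hkb : (D + (D - lam)) * S.card ≤ (D - lam) * Fintype.card V := by
      apply keyBound G hreg S hS
      intro v hv hodd
      obtain ⟨hle, hpos⟩ := hvert v hv hodd
      omega
    calc (2 * D - lam) * S.card ≤ (D + (D - lam)) * S.card := by
          apply Nat.mul_le_mul_right
          omega
      _ ≤ (D - lam) * Fintype.card V := hkb
end

section
/- If S is an odd independent set in a finite simple graph G, then S contains no forbidden pair and no forcing pair; that is, there are no two vertices x, y ∈ S forming a forbidden pair, and no two vertices x, y ∈ S forming a forcing pair. -/
open Finset

/-- Two nonadjacent vertices `x, y` form a forbidden pair if they have a common neighbor `z`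
with `N[z] ⊆ N[x] ∪ N[y]`. -/
def ForbiddenPair {V : Type*} (G : SimpleGraph V) (x y : V) : Prop :=
  x ≠ y ∧ ¬ G.Adj x y ∧ ∃ z : V, G.Adj z x ∧ G.Adj z y ∧
    ∀ w : V, (w = z ∨ G.Adj z w) → (w = x ∨ G.Adj x w ∨ w = y ∨ G.Adj y w)

/-- Two nonadjacent common neighbors `x, y` of a vertex `z` form a forcing pair if every
`w ∈ N(z)` that is distinct from and nonadjacent to both `x` and `y` forms a forbidden pair
with `x` or with `y`. -/
def ForcingPair {V : Type*} (G : SimpleGraph V) (x y : V) : Prop :=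
  x ≠ y ∧ ¬ G.Adj x y ∧ ∃ z : V, G.Adj z x ∧ G.Adj z y ∧
    ∀ w : V, G.Adj z w → w ≠ x → w ≠ y → ¬ G.Adj w x → ¬ G.Adj w y →
      (ForbiddenPair G x w ∨ ForbiddenPair G y w)

/-- An odd independent set contains no forbidden pair and no forcing pair. -/
theorem isOddIndepSet_no_forbidden_no_forcing_pair
    {V : Type*} [Fintype V] [DecidableEq V]
    (G : SimpleGraph V) [DecidableRel G.Adj] (S : Finset V) (hS : IsOddIndepSet G S) :
    (∀ x ∈ S, ∀ y ∈ S, ¬ ForbiddenPair G x y) ∧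
    (∀ x ∈ S, ∀ y ∈ S, ¬ ForcingPair G x y) := by
  obtain ⟨hind, hodd⟩ := hS
  -- common setup: for z ∉ S adjacent to x,y ∈ S, the filter contains x,y and has odd card
  have key : ∀ x ∈ S, ∀ y ∈ S, ¬ ForbiddenPair G x y := by
    intro x hx y hy ⟨hxy, _, z, hzx, hzy, hdom⟩
    have hzS : z ∉ S := fun hz => hind z hz x hx hzx
    set T := S.filter fun u => G.Adj z u with hT
    have hxT : x ∈ T := mem_filter.mpr ⟨hx, hzx⟩
    have hyT : y ∈ T := mem_filter.mpr ⟨hy, hzy⟩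
    have hTeq : T = {x, y} := by
      apply Finset.Subset.antisymm
      · intro w hw
        obtain ⟨hwS, hzw⟩ := mem_filter.mp hw
        rcases hdom w (Or.inr hzw) with h | h | h | h
        · simp [h]
        · exact absurd h (hind x hx w hwS)
        · simp [h]
        · exact absurd h (hind y hy w hwS)
      · intro w hw
        rcases mem_insert.mp hw with h | h
        · exact h ▸ hxT
        · exact (mem_singleton.mp h) ▸ hyT
    rcases hodd z hzS with h | h
    · rw [← hT] at h; rw [h] at hxT; exact absurd hxT (notMem_empty x)
    · rw [← hT, hTeq, card_insert_of_notMem (by simp [hxy]), card_singleton] at h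
      simp [Nat.odd_iff] at h
  refine ⟨key, ?_⟩
  intro x hx y hy ⟨hxy, hnadj, z, hzx, hzy, hforce⟩
  have hzS : z ∉ S := fun hz => hind z hz x hx hzx
  set T := S.filter fun u => G.Adj z u with hT
  have hxT : x ∈ T := mem_filter.mpr ⟨hx, hzx⟩
  have hyT : y ∈ T := mem_filter.mpr ⟨hy, hzy⟩
  -- T has a third element
  have : ∃ w ∈ T, w ≠ x ∧ w ≠ y := by
    by_contra hcon
    push_neg at hcon
    have hTeq : T = {x, y} := by
      apply Finset.Subset.antisymm
      · intro w hw
        by_cases h1 : w = x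
        · simp [h1]
        by_cases h2 : w = y
        · simp [h2]
        exact absurd (hcon w hw h1) h2
      · intro w hw
        rcases mem_insert.mp hw with h | h
        · exact h ▸ hxT
        · exact (mem_singleton.mp h) ▸ hyT
    rcases hodd z hzS with h | h
    · rw [← hT] at h; rw [h] at hxT; exact absurd hxT (notMem_empty x)
    · rw [← hT, hTeq, card_insert_of_notMem (by simp [hxy]), card_singleton] at h
      simp [Nat.odd_iff] at h
  obtain ⟨w, hwT, hwx, hwy⟩ := this
  obtain ⟨hwS, hzw⟩ := mem_filter.mp hwT
  rcases hforce w hzw hwx hwy (fun h => hind w hwS x hx h) (fun h => hind w hwS y hy h) with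
    h | h
  · exact key x hx w hwS h
  · exact key y hy w hwS h
end

section
/- For every n ≥ 3, the odd independence number of the cycle on n vertices is ⌈(n−2)/3⌉: αod(C_n) = ⌈(n−2)/3⌉. -/
open Finset

open Fin.CommRing



private lemma finSubVal {m : ℕ} (a b : Fin (m+3)) :
    (a - b).val = (m + 3 + a.val - b.val) % (m+3) := by
  have := b.isLt; simp only [Fin.sub_def]; congr 1; omega

private lemma cycAdjIff {m : ℕ} {v u : Fin (m+3)} :
    (SimpleGraph.cycleGraph (m+3)).Adj v u ↔ u = v - 1 ∨ u = v + 1 := by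
  constructor
  · intro hadj
    rcases (SimpleGraph.cycleGraph_adj (n := m+1)).mp hadj with h | h
    · left; rw [← h]; ring
    · right; rw [← h]; ring
  · intro h
    apply (SimpleGraph.cycleGraph_adj (n := m+1)).mpr
    rcases h with rfl | rfl
    · left; exact sub_sub_cancel v 1
    · right; exact add_sub_cancel_left v 1

private lemma gapIff (m : ℕ) (S : Finset (Fin (m+3))) :
    IsOddIndepSet (SimpleGraph.cycleGraph (m+3)) S ↔
      ∀ a ∈ S, ∀ b ∈ S, a - b ≠ 1 ∧ a - b ≠ 2 := by
  have v2 : ((2 : Fin (m+3))).val = 2 := by simp [Fin.val_two]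
  constructor
  · rintro ⟨hind, hodd⟩ a ha b hb
    constructor
    · intro h1
      exact hind a ha b hb (cycAdjIff.mpr (Or.inl (by rw [← h1]; ring)))
    · intro h2
      have hab : a = b + 2 := by linear_combination h2
      have hv : b + 1 ∉ S := fun hvS =>
        hind (b+1) hvS b hb (cycAdjIff.mpr (Or.inl (by ring)))
      have hfil : S.filter (fun u => (SimpleGraph.cycleGraph (m+3)).Adj (b+1) u) = {b, a} := by
        ext u
        simp only [mem_filter, mem_insert, mem_singleton, cycAdjIff]
        constructor
        · rintro ⟨huS, h | h⟩
          · left; rw [h]; ring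
          · right; rw [h, hab]; ring
        · rintro (rfl | rfl)
          · exact ⟨hb, Or.inl (by ring)⟩
          · exact ⟨ha, Or.inr (by rw [hab]; ring)⟩
      have hne : b ≠ a := by
        intro h
        have h0 : (2 : Fin (m+3)) = 0 := by linear_combination - h2 - h
        have := congrArg Fin.val h0
        simp [v2] at this
        rw [Nat.mod_eq_of_lt (by omega)] at this
        omega
      rcases hodd (b+1) hv with he | ho
      · rw [hfil] at he
        exact absurd he (by simp)
      · rw [hfil, card_insert_of_notMem (by simpa using hne), card_singleton] at ho
        simp [Nat.odd_iff] at ho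
  · intro hP
    constructor
    · intro a ha b hb hadj
      rcases cycAdjIff.mp hadj with h | h
      · exact (hP a ha b hb).1 (by rw [h]; exact sub_sub_cancel a 1)
      · exact (hP b hb a ha).1 (by rw [h]; exact add_sub_cancel_left a 1)
    · intro v hv
      set F := S.filter (fun u => (SimpleGraph.cycleGraph (m+3)).Adj v u) with hF
      have hsub : F ⊆ {v - 1, v + 1} := by
        intro u hu
        rw [hF, mem_filter] at hu
        rcases cycAdjIff.mp hu.2 with h | h <;> simp [h]
      have hc2 : F.card ≤ 2 :=
        (card_le_card hsub).trans (card_insert_le _ _ |>.trans (by simp))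
      have hne2 : F.card ≠ 2 := by
        intro h2
        have hFe : F = {v - 1, v + 1} :=
          eq_of_subset_of_card_le hsub (by
            calc ({v-1, v+1} : Finset _).card ≤ 2 :=
                  (card_insert_le _ _).trans (by simp)
              _ = F.card := h2.symm)
        have h1 : v - 1 ∈ F := hFe ▸ (by simp)
        have h2' : v + 1 ∈ F := hFe ▸ (by simp)
        rw [hF, mem_filter] at h1 h2'
        exact (hP (v+1) h2'.1 (v-1) h1.1).2 (by ring)
      rcases Nat.eq_zero_or_pos F.card with h0 | hpos
      · exact Or.inl (card_eq_zero.mp h0)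
      · right
        have : F.card = 1 := by omega
        rw [this]; exact odd_one

private lemma gapBound (m : ℕ) (S : Finset (Fin (m+3)))
    (hP : ∀ a ∈ S, ∀ b ∈ S, a - b ≠ 1 ∧ a - b ≠ 2) :
    S.card ≤ (m+3)/3 := by
  classical
  set T : Fin (m+3) → Finset (Fin (m+3)) := fun a => {a, a+1, a+2} with hT
  have vne : ∀ (c : Fin (m+3)), c.val ∈ ({1, 2} : Set ℕ) → c ≠ 0 := by
    rintro c hc rfl
    simp at hc
  have hcardT : ∀ a, (T a).card = 3 := by
    intro a
    rw [hT]
    have e1 : a ≠ a + 1 := by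
      intro h
      exact vne 1 (by simp) (by linear_combination - h)
    have e2 : a ≠ a + 2 := by
      intro h
      exact vne 2 (by simp [Fin.val_two]) (by linear_combination - h)
    have e3 : a + 1 ≠ a + 2 := by
      intro h
      exact vne 1 (by simp) (by linear_combination - h)
    rw [card_insert_of_notMem (by simp [e1, e2]),
        card_insert_of_notMem (by simp [e3]), card_singleton]
  have hdisj : ∀ a ∈ S, ∀ b ∈ S, a ≠ b → Disjoint (T a) (T b) := by
    intro a ha b hb hne
    rw [Finset.disjoint_left]
    intro u hu hu'
    rw [hT] at hu hu'
    simp only [mem_insert, mem_singleton] at hu hu'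
    rcases hu with h' | h' | h' <;> rcases hu' with h | h | h <;>
      first
        | exact hne (by linear_combination h' - h)
        | exact hne (by linear_combination h - h')
        | exact (hP a ha b hb).1 (by linear_combination h' - h)
        | exact (hP a ha b hb).1 (by linear_combination h - h')
        | exact (hP a ha b hb).2 (by linear_combination h' - h)
        | exact (hP a ha b hb).2 (by linear_combination h - h')
        | exact (hP b hb a ha).1 (by linear_combination h' - h)
        | exact (hP b hb a ha).1 (by linear_combination h - h')
        | exact (hP b hb a ha).2 (by linear_combination h' - h)
        | exact (hP b hb a ha).2 (by linear_combination h - h')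
  have hbu : (S.biUnion T).card = 3 * S.card := by
    rw [Finset.card_biUnion hdisj]
    simp [hcardT, mul_comm]
  have hle : (S.biUnion T).card ≤ m + 3 := by
    simpa using card_le_card (Finset.subset_univ (S.biUnion T))
  omega

private lemma gapAchieve (m : ℕ) :
    ∃ S : Finset (Fin (m+3)),
      (∀ a ∈ S, ∀ b ∈ S, a - b ≠ 1 ∧ a - b ≠ 2) ∧ S.card = (m+3)/3 := by
  set k := (m+3)/3 with hk
  set f : ℕ → Fin (m+3) := fun i => ⟨3*i % (m+3), Nat.mod_lt _ (by omega)⟩ with hf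
  have hfv : ∀ i < k, (f i).val = 3*i := by
    intro i hi
    exact Nat.mod_eq_of_lt (by omega)
  refine ⟨(Finset.range k).image f, ?_, ?_⟩
  · intro a ha b hb
    simp only [mem_image, mem_range] at ha hb
    obtain ⟨i, hi, rfl⟩ := ha
    obtain ⟨j, hj, rfl⟩ := hb
    have hsub : (f i - f j).val = (m + 3 + 3*i - 3*j) % (m+3) := by
      rw [finSubVal, hfv i hi, hfv j hj]
    have hval : (f i - f j).val ≠ 1 ∧ (f i - f j).val ≠ 2 := by
      rw [hsub]
      rcases le_or_gt j i with h | h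
      · rw [show m + 3 + 3*i - 3*j = (m+3) + 3*(i-j) by omega,
            Nat.add_mod_left, Nat.mod_eq_of_lt (by omega)]
        omega
      · rw [Nat.mod_eq_of_lt (by omega)]
        omega
    constructor
    · intro h; exact hval.1 (by rw [h]; rfl)
    · intro h; exact hval.2 (by rw [h]; simp [Fin.val_two])
  · rw [Finset.card_image_of_injOn, card_range]
    intro i hi j hj hij
    simp only [mem_coe, mem_range] at hi hj
    have := congrArg Fin.val hij
    rw [hfv i hi, hfv j hj] at this
    omega

private lemma oddIndepNum_eq (m : ℕ) :
    oddIndepNum (SimpleGraph.cycleGraph (m+3)) = (m+3)/3 := by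
  unfold oddIndepNum
  have hub : ∀ x ∈ {k | ∃ S : Finset (Fin (m+3)),
      IsOddIndepSet (SimpleGraph.cycleGraph (m+3)) S ∧ S.card = k}, x ≤ (m+3)/3 := by
    rintro x ⟨S, hS, rfl⟩
    exact gapBound m S ((gapIff m S).mp hS)
  obtain ⟨S, h1, h2⟩ := gapAchieve m
  have hmem : (m+3)/3 ∈ {k | ∃ S : Finset (Fin (m+3)),
      IsOddIndepSet (SimpleGraph.cycleGraph (m+3)) S ∧ S.card = k} :=
    ⟨S, (gapIff m S).mpr h1, h2⟩
  exact le_antisymm (csSup_le ⟨_, hmem⟩ hub) (le_csSup ⟨(m+3)/3, hub⟩ hmem)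

/-- For every `n ≥ 3`, `αod(C_n) = ⌈(n−2)/3⌉`. -/
theorem oddIndepNum_cycleGraph (n : ℕ) (hn : 3 ≤ n) :
    (oddIndepNum (SimpleGraph.cycleGraph n) : ℤ) = ⌈((n : ℚ) - 2) / 3⌉ := by
  obtain ⟨m, rfl⟩ : ∃ m, n = m + 3 := ⟨n - 3, by omega⟩
  rw [oddIndepNum_eq m]
  set q := (m+3)/3 with hqdef
  have h1 : 3 * q ≤ m+3 ∧ m+3 < 3*q + 3 := by omega
  clear_value q
  rw [eq_comm, Int.ceil_eq_iff]
  have hq1 : (3:ℚ) * (q : ℚ) ≤ (m:ℚ)+3 := by exact_mod_cast h1.1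
  have hq2 : (m:ℚ)+3 < 3 * (q : ℚ) + 3 := by exact_mod_cast h1.2
  have hq3 : (m:ℚ)+1 ≤ 3 * (q : ℚ) := by exact_mod_cast (by omega : m+1 ≤ 3*q)
  constructor
  · rw [lt_div_iff₀ (by norm_num : (0:ℚ) < 3)]
    push_cast
    linarith
  · rw [div_le_iff₀ (by norm_num : (0:ℚ) < 3)]
    push_cast
    linarith
end

section
/- For every n ≥ 2, the half-graph H_{n,n} satisfies χso(H_{n,n}) = n + 1 and αod(H_{n,n}) = 2. Moreover, every odd independent set of H_{n,n} with more than one element has the form {v_i, u_j} with i < j. -/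
open Finset

/-- Adjacency of the half-graph `H_{n,n}`: vertices `Sum.inl i` (the `u`'s) and `Sum.inr j`
(the `v`'s), with `u_i` adjacent to `v_j` iff `i ≤ j`. -/
def halfAdj (n : ℕ) : Fin n ⊕ Fin n → Fin n ⊕ Fin n → Prop
  | Sum.inl i, Sum.inr j => i ≤ j
  | Sum.inr j, Sum.inl i => i ≤ j
  | _, _ => False

/-- The half-graph `H_{n,n}`. -/
def halfGraph (n : ℕ) : SimpleGraph (Fin n ⊕ Fin n) where
  Adj := halfAdj n
  symm := by
    constructor
    intro x y h
    cases x <;> cases y <;> simp only [halfAdj] at h ⊢ <;> exact h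
  loopless := by
    constructor
    intro x h
    cases x <;> simp only [halfAdj] at h

instance (n : ℕ) : DecidableRel (halfGraph n).Adj := fun x y =>
  match x, y with
  | Sum.inl i, Sum.inr j => inferInstanceAs (Decidable (i ≤ j))
  | Sum.inr j, Sum.inl i => inferInstanceAs (Decidable (i ≤ j))
  | Sum.inl _, Sum.inl _ => inferInstanceAs (Decidable False)
  | Sum.inr _, Sum.inr _ => inferInstanceAs (Decidable False)

section Aux
variable {n : ℕ}

@[simp] lemma hadj_lr (i j : Fin n) : (halfGraph n).Adj (Sum.inl i) (Sum.inr j) ↔ i ≤ j := Iff.rfl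
@[simp] lemma hadj_rl (i j : Fin n) : (halfGraph n).Adj (Sum.inr j) (Sum.inl i) ↔ i ≤ j := Iff.rfl
@[simp] lemma hadj_ll (i j : Fin n) : ¬ (halfGraph n).Adj (Sum.inl i) (Sum.inl j) := id
@[simp] lemma hadj_rr (i j : Fin n) : ¬ (halfGraph n).Adj (Sum.inr i) (Sum.inr j) := id

lemma half_struct (S : Finset (Fin n ⊕ Fin n))
    (hS : IsOddIndepSet (halfGraph n) S) (hcard : 1 < S.card) :
    ∃ i j : Fin n, i < j ∧ S = {Sum.inr i, Sum.inl j} := by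
  obtain ⟨hind, hodd⟩ := hS
  set I : Finset (Fin n) := univ.filter (fun i => Sum.inl i ∈ S) with hI_def
  set J : Finset (Fin n) := univ.filter (fun j => Sum.inr j ∈ S) with hJ_def
  have hImem : ∀ i : Fin n, i ∈ I ↔ Sum.inl i ∈ S := by
    intro i; simp [hI_def]
  have hJmem : ∀ j : Fin n, j ∈ J ↔ Sum.inr j ∈ S := by
    intro j; simp [hJ_def]
  have hI1 : I.card ≤ 1 := by
    by_contra h
    push_neg at h
    have hne : I.Nonempty := Finset.card_pos.mp (by omega)
    set a := I.min' hne with ha_def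
    have haI : a ∈ I := I.min'_mem hne
    have hne' : (I.erase a).Nonempty := by
      rw [← Finset.card_pos, Finset.card_erase_of_mem haI]; omega
    set b := (I.erase a).min' hne' with hb_def
    have hbI' : b ∈ I.erase a := (I.erase a).min'_mem hne'
    have hbI : b ∈ I := Finset.mem_of_mem_erase hbI'
    have hab : a < b := lt_of_le_of_ne (I.min'_le b hbI) (Finset.ne_of_mem_erase hbI').symm
    have hbS : Sum.inr b ∉ S := fun h =>
      hind (Sum.inl a) ((hImem a).mp haI) (Sum.inr b) h (le_of_lt hab)
    have hTeq : (S.filter fun u => (halfGraph n).Adj (Sum.inr b) u)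
        = {Sum.inl a, Sum.inl b} := by
      ext x
      cases x with
      | inl i =>
        simp only [Finset.mem_filter, hadj_rl, Finset.mem_insert, Finset.mem_singleton]
        constructor
        · rintro ⟨hiS, hib⟩
          by_cases hia : i = a
          · left; exact congrArg Sum.inl hia
          · right
            have hiI : i ∈ I.erase a := Finset.mem_erase.mpr ⟨hia, (hImem i).mpr hiS⟩
            have : b ≤ i := (I.erase a).min'_le i hiI
            exact congrArg Sum.inl (le_antisymm hib this)
        · rintro (h | h) <;> injection h with h' <;> subst h'
          · exact ⟨(hImem a).mp haI, le_of_lt hab⟩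
          · exact ⟨(hImem b).mp hbI, le_refl b⟩
      | inr j =>
        simp only [Finset.mem_filter, Finset.mem_insert, Finset.mem_singleton]
        constructor
        · rintro ⟨_, h⟩; exact absurd h (hadj_rr b j)
        · rintro (h | h) <;> exact absurd h (by simp)
    have hTcard : (S.filter fun u => (halfGraph n).Adj (Sum.inr b) u).card = 2 := by
      rw [hTeq]
      rw [Finset.card_insert_of_notMem (by simp [hab.ne]), Finset.card_singleton]
    rcases hodd (Sum.inr b) hbS with h | h
    · rw [h] at hTcard; simp at hTcard
    · rw [hTcard] at h; exact (Nat.not_odd_iff_even.mpr (by norm_num)) h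
  have hJ1 : J.card ≤ 1 := by
    by_contra h
    push_neg at h
    have hne : J.Nonempty := Finset.card_pos.mp (by omega)
    set a := J.max' hne with ha_def
    have haJ : a ∈ J := J.max'_mem hne
    have hne' : (J.erase a).Nonempty := by
      rw [← Finset.card_pos, Finset.card_erase_of_mem haJ]; omega
    set b := (J.erase a).max' hne' with hb_def
    have hbJ' : b ∈ J.erase a := (J.erase a).max'_mem hne'
    have hbJ : b ∈ J := Finset.mem_of_mem_erase hbJ'
    have hab : b < a := lt_of_le_of_ne (J.le_max' b hbJ) (Finset.ne_of_mem_erase hbJ')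
    have hbS : Sum.inl b ∉ S := fun h =>
      hind (Sum.inl b) h (Sum.inr b) ((hJmem b).mp hbJ) (le_refl b)
    have hTeq : (S.filter fun u => (halfGraph n).Adj (Sum.inl b) u)
        = {Sum.inr a, Sum.inr b} := by
      ext x
      cases x with
      | inl i =>
        simp only [Finset.mem_filter, Finset.mem_insert, Finset.mem_singleton]
        constructor
        · rintro ⟨_, h⟩; exact absurd h (hadj_ll b i)
        · rintro (h | h) <;> exact absurd h (by simp)
      | inr j =>
        simp only [Finset.mem_filter, hadj_lr, Finset.mem_insert, Finset.mem_singleton]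
        constructor
        · rintro ⟨hjS, hbj⟩
          by_cases hja : j = a
          · left; exact congrArg Sum.inr hja
          · right
            have hjJ : j ∈ J.erase a := Finset.mem_erase.mpr ⟨hja, (hJmem j).mpr hjS⟩
            have : j ≤ b := (J.erase a).le_max' j hjJ
            exact congrArg Sum.inr (le_antisymm this hbj)
        · rintro (h | h) <;> injection h with h' <;> subst h'
          · exact ⟨(hJmem a).mp haJ, le_of_lt hab⟩
          · exact ⟨(hJmem b).mp hbJ, le_refl b⟩
    have hTcard : (S.filter fun u => (halfGraph n).Adj (Sum.inl b) u).card = 2 := by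
      rw [hTeq]
      rw [Finset.card_insert_of_notMem (by simp [hab.ne']), Finset.card_singleton]
    rcases hodd (Sum.inl b) hbS with h | h
    · rw [h] at hTcard; simp at hTcard
    · rw [hTcard] at h; exact (Nat.not_odd_iff_even.mpr (by norm_num)) h
  have hSeq : S = I.image Sum.inl ∪ J.image Sum.inr := by
    ext x
    cases x with
    | inl i => simp [hImem]
    | inr j => simp [hJmem]
  have hScard : S.card = I.card + J.card := by
    rw [hSeq, Finset.card_union_of_disjoint, Finset.card_image_of_injective _ Sum.inl_injective,
      Finset.card_image_of_injective _ Sum.inr_injective]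
    · simp [Finset.disjoint_left]
  have hI1' : I.card = 1 := by omega
  have hJ1' : J.card = 1 := by omega
  obtain ⟨a, ha⟩ := Finset.card_eq_one.mp hI1'
  obtain ⟨b, hb⟩ := Finset.card_eq_one.mp hJ1'
  have haS : Sum.inl a ∈ S := (hImem a).mp (by simp [ha])
  have hbS : Sum.inr b ∈ S := (hJmem b).mp (by simp [hb])
  have hba : b < a := by
    by_contra h
    push_neg at h
    exact hind (Sum.inl a) haS (Sum.inr b) hbS h
  refine ⟨b, a, hba, ?_⟩
  rw [hSeq, ha, hb]
  ext x
  cases x <;> simp [or_comm]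

end Aux

section Aux2
variable {n : ℕ}

lemma half_pair_odd (i j : Fin n) (hij : i < j) :
    IsOddIndepSet (halfGraph n) ({Sum.inr i, Sum.inl j} : Finset (Fin n ⊕ Fin n)) := by
  constructor
  · intro u hu v hv
    simp only [Finset.mem_insert, Finset.mem_singleton] at hu hv
    rcases hu with rfl | rfl <;> rcases hv with rfl | rfl
    · exact hadj_rr i i
    · exact fun h => absurd (h : j ≤ i) (not_le.mpr hij)
    · exact fun h => absurd (h : j ≤ i) (not_le.mpr hij)
    · exact hadj_ll j j
  · intro v hv
    have hle : (({Sum.inr i, Sum.inl j} : Finset (Fin n ⊕ Fin n)).filter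
        fun u => (halfGraph n).Adj v u).card ≤ 1 := by
      rw [Finset.card_le_one]
      intro a ha b hb
      simp only [Finset.mem_filter, Finset.mem_insert, Finset.mem_singleton] at ha hb
      cases v with
      | inl p =>
        have hx : ∀ x : Fin n ⊕ Fin n, (x = Sum.inr i ∨ x = Sum.inl j) →
            (halfGraph n).Adj (Sum.inl p) x → x = Sum.inr i := by
          rintro x (rfl | rfl) hadj
          · rfl
          · exact absurd hadj (hadj_ll p j)
        rw [hx a ha.1 ha.2, hx b hb.1 hb.2]
      | inr q =>
        have hx : ∀ x : Fin n ⊕ Fin n, (x = Sum.inr i ∨ x = Sum.inl j) →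
            (halfGraph n).Adj (Sum.inr q) x → x = Sum.inl j := by
          rintro x (rfl | rfl) hadj
          · exact absurd hadj (hadj_rr q i)
          · rfl
        rw [hx a ha.1 ha.2, hx b hb.1 hb.2]
    interval_cases h : (({Sum.inr i, Sum.inl j} : Finset (Fin n ⊕ Fin n)).filter
        fun u => (halfGraph n).Adj v u).card
    · exact Or.inl (Finset.card_eq_zero.mp h)
    · exact Or.inr odd_one

lemma half_oddIndepNum (hn : 2 ≤ n) : oddIndepNum (halfGraph n) = 2 := by
  have h01 : (⟨0, by omega⟩ : Fin n) < ⟨1, by omega⟩ := by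
    simp [Fin.lt_def]
  have h2 : 2 ∈ {k | ∃ S : Finset (Fin n ⊕ Fin n), IsOddIndepSet (halfGraph n) S ∧ S.card = k} := by
    refine ⟨{Sum.inr ⟨0, by omega⟩, Sum.inl ⟨1, by omega⟩}, half_pair_odd _ _ h01, ?_⟩
    rw [Finset.card_insert_of_notMem (by simp), Finset.card_singleton]
  have hub : ∀ k ∈ {k | ∃ S : Finset (Fin n ⊕ Fin n), IsOddIndepSet (halfGraph n) S ∧ S.card = k},
      k ≤ 2 := by
    rintro k ⟨S, hS, rfl⟩
    by_contra h
    push_neg at h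
    obtain ⟨i, j, hij, rfl⟩ := half_struct S hS (by omega)
    rw [Finset.card_insert_of_notMem (by simp), Finset.card_singleton] at h
    omega
  exact le_antisymm (csSup_le ⟨2, h2⟩ hub) (le_csSup ⟨2, hub⟩ h2)

def halfCol (n : ℕ) : (Fin n ⊕ Fin n) → Fin (n + 1)
  | Sum.inl i => if i.val = 0 then Fin.last n else ⟨i.val - 1, by omega⟩
  | Sum.inr j => j.castSucc

lemma halfCol_strong : IsStrongOddColoring (halfGraph n) (halfCol n) := by
  constructor
  · intro u v huv
    cases u with
    | inl i =>
      cases v with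
      | inl i' => exact absurd huv (hadj_ll i i')
      | inr j =>
        have hij : i.val ≤ j.val := huv
        have hjn : j.val < n := j.isLt
        simp only [halfCol, Fin.ext_iff, Fin.castSucc, Fin.last]
        split_ifs with h0 <;> simp [Fin.ext_iff] <;> omega
    | inr j =>
      cases v with
      | inl i =>
        have hij : i.val ≤ j.val := huv
        have hjn : j.val < n := j.isLt
        simp only [halfCol, Fin.ext_iff, Fin.castSucc, Fin.last]
        split_ifs with h0 <;> simp [Fin.ext_iff] <;> omega
      | inr j' => exact absurd huv (hadj_rr j j')
  · intro v k
    have hle : (univ.filter fun u => (halfGraph n).Adj v u ∧ halfCol n u = k).card ≤ 1 := by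
      rw [Finset.card_le_one]
      intro a ha b hb
      simp only [Finset.mem_filter, Finset.mem_univ, true_and] at ha hb
      obtain ⟨ha1, ha2⟩ := ha
      obtain ⟨hb1, hb2⟩ := hb
      have hab : halfCol n a = halfCol n b := ha2.trans hb2.symm
      cases v with
      | inl p =>
        cases a with
        | inl x => exact absurd ha1 (hadj_ll p x)
        | inr ja =>
          cases b with
          | inl x => exact absurd hb1 (hadj_ll p x)
          | inr jb =>
            simp only [halfCol, Fin.ext_iff, Fin.castSucc] at hab
            exact congrArg Sum.inr (Fin.ext hab)
      | inr q =>
        cases a with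
        | inr x => exact absurd ha1 (hadj_rr q x)
        | inl ia =>
          cases b with
          | inr x => exact absurd hb1 (hadj_rr q x)
          | inl ib =>
            have hia : ia.val < n := ia.isLt
            have hib : ib.val < n := ib.isLt
            simp only [halfCol, Fin.ext_iff, Fin.last] at hab
            split_ifs at hab <;> simp at hab <;>
              exact congrArg Sum.inl (Fin.ext (by omega))
    interval_cases h : (univ.filter fun u => (halfGraph n).Adj v u ∧ halfCol n u = k).card
    · exact Or.inl (Finset.card_eq_zero.mp h)
    · exact Or.inr odd_one

end Aux2

section LB
variable {n m : ℕ}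

/-- Number of neighbors of `u_p` with color `κ`. -/
def cnt (c : Fin n ⊕ Fin n → Fin m) (κ : Fin m) (p : Fin n) : ℕ :=
  (univ.filter fun u => (halfGraph n).Adj (Sum.inl p) u ∧ c u = κ).card

lemma cnt_form (c : Fin n ⊕ Fin n → Fin m) (κ : Fin m) (p : Fin n) :
    ∀ x ∈ (univ.filter fun u => (halfGraph n).Adj (Sum.inl p) u ∧ c u = κ),
      ∃ q : Fin n, x = Sum.inr q ∧ p ≤ q ∧ c (Sum.inr q) = κ := by
  intro x hx
  rw [Finset.mem_filter] at hx
  cases x with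
  | inl y => exact absurd hx.2.1 (hadj_ll p y)
  | inr q => exact ⟨q, rfl, hx.2.1, hx.2.2⟩

lemma cnt_le_one (c : Fin n ⊕ Fin n → Fin m)
    (hodd : ∀ v : Fin n ⊕ Fin n, ∀ k : Fin m,
      (univ.filter fun u => (halfGraph n).Adj v u ∧ c u = k) = ∅ ∨
      Odd (univ.filter fun u => (halfGraph n).Adj v u ∧ c u = k).card)
    (κ : Fin m) (p : Fin n) : cnt c κ p ≤ 1 := by
  by_contra hcon
  push_neg at hcon
  have hMne : (univ.filter fun q : Fin n => 2 ≤ cnt c κ q).Nonempty :=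
    ⟨p, Finset.mem_filter.mpr ⟨Finset.mem_univ _, hcon⟩⟩
  obtain ⟨P, hP2, hPmax⟩ : ∃ P : Fin n, 2 ≤ cnt c κ P ∧ ∀ q : Fin n, 2 ≤ cnt c κ q → q ≤ P := by
    refine ⟨(univ.filter fun q : Fin n => 2 ≤ cnt c κ q).max' hMne, ?_, ?_⟩
    · have h := (univ.filter fun q : Fin n => 2 ≤ cnt c κ q).max'_mem hMne
      rw [Finset.mem_filter] at h
      exact h.2
    · intro q hq
      exact Finset.le_max' _ q (Finset.mem_filter.mpr ⟨Finset.mem_univ _, hq⟩)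
  have hPodd : Odd (cnt c κ P) := by
    rcases hodd (Sum.inl P) κ with h | h
    · exfalso
      unfold cnt at hP2
      rw [h] at hP2
      simp at hP2
    · exact h
  have hP3 : 3 ≤ cnt c κ P := by
    obtain ⟨t, ht⟩ := hPodd; omega
  have h1lt : 1 < (univ.filter fun u => (halfGraph n).Adj (Sum.inl P) u ∧ c u = κ).card := by
    unfold cnt at hP2; omega
  obtain ⟨a, ha, b, hb, hab⟩ := Finset.one_lt_card.mp h1lt
  obtain ⟨qa, rfl, hqa, -⟩ := cnt_form c κ P a ha
  obtain ⟨qb, rfl, hqb, -⟩ := cnt_form c κ P b hb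
  have hqab : qa.val ≠ qb.val := fun h => hab (congrArg Sum.inr (Fin.ext h))
  have hPn : P.val + 1 < n := by
    have h1 : qa.val < n := qa.isLt
    have h2 : qb.val < n := qb.isLt
    have h3 : P.val ≤ qa.val := hqa
    have h4 : P.val ≤ qb.val := hqb
    omega
  have hsub : (univ.filter fun u => (halfGraph n).Adj (Sum.inl P) u ∧ c u = κ) ⊆
      insert (Sum.inr P)
        (univ.filter fun u => (halfGraph n).Adj (Sum.inl ⟨P.val + 1, hPn⟩) u ∧ c u = κ) := by
    intro x hx
    obtain ⟨q, rfl, hpq, hcq⟩ := cnt_form c κ P x hx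
    by_cases hq : q = P
    · rw [hq]; exact Finset.mem_insert_self _ _
    · refine Finset.mem_insert_of_mem (Finset.mem_filter.mpr ⟨Finset.mem_univ _, ?_, hcq⟩)
      have : P.val < q.val := lt_of_le_of_ne hpq (fun h => hq (Fin.ext h.symm))
      exact (Nat.succ_le_of_lt this : ((⟨P.val + 1, hPn⟩ : Fin n) : ℕ) ≤ q.val)
  have hcnt' : cnt c κ P ≤ cnt c κ ⟨P.val + 1, hPn⟩ + 1 := by
    unfold cnt
    calc (univ.filter fun u => (halfGraph n).Adj (Sum.inl P) u ∧ c u = κ).card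
        ≤ (insert (Sum.inr P)
            (univ.filter fun u =>
              (halfGraph n).Adj (Sum.inl ⟨P.val + 1, hPn⟩) u ∧ c u = κ)).card :=
          Finset.card_le_card hsub
      _ ≤ _ + 1 := Finset.card_insert_le _ _
  have h2' : 2 ≤ cnt c κ ⟨P.val + 1, hPn⟩ := by omega
  have := hPmax _ h2'
  rw [Fin.le_def] at this
  simp at this

lemma half_lb (hn : 2 ≤ n) (c : (Fin n ⊕ Fin n) → Fin m)
    (hc : IsStrongOddColoring (halfGraph n) c) : n + 1 ≤ m := by
  obtain ⟨hprop, hodd⟩ := hc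
  have E1 : ∀ j k : Fin n, c (Sum.inr j) = c (Sum.inr k) → j = k := by
    have key : ∀ j k : Fin n, j < k → c (Sum.inr j) ≠ c (Sum.inr k) := by
      intro j k hjk hceq
      have hsub : ({Sum.inr j, Sum.inr k} : Finset (Fin n ⊕ Fin n)) ⊆
          univ.filter fun u => (halfGraph n).Adj (Sum.inl j) u ∧ c u = c (Sum.inr j) := by
        intro x hx
        simp only [Finset.mem_insert, Finset.mem_singleton] at hx
        rcases hx with rfl | rfl <;> rw [Finset.mem_filter]
        · exact ⟨Finset.mem_univ _, le_refl j, rfl⟩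
        · exact ⟨Finset.mem_univ _, le_of_lt hjk, hceq.symm⟩
      have h2 : ({Sum.inr j, Sum.inr k} : Finset (Fin n ⊕ Fin n)).card = 2 := by
        rw [Finset.card_insert_of_notMem (by simp [hjk.ne]), Finset.card_singleton]
      have : 2 ≤ cnt c (c (Sum.inr j)) j := by
        unfold cnt
        calc 2 = _ := h2.symm
          _ ≤ _ := Finset.card_le_card hsub
      have h1 := cnt_le_one c hodd (c (Sum.inr j)) j
      omega
    intro j k h
    rcases lt_trichotomy j k with hlt | heq | hlt
    · exact absurd h (key j k hlt)
    · exact heq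
    · exact absurd h.symm (key k j hlt)
  have h0n : (0 : ℕ) < n := by omega
  have E2 : ∀ j : Fin n, c (Sum.inl ⟨0, h0n⟩) ≠ c (Sum.inr j) := by
    intro j
    exact hprop (Sum.inl ⟨0, h0n⟩) (Sum.inr j) (Nat.zero_le j.val)
  have hinj : Function.Injective (fun k : Fin (n + 1) =>
      if h : k.val < n then c (Sum.inr ⟨k.val, h⟩) else c (Sum.inl ⟨0, h0n⟩)) := by
    intro k l heq
    simp only at heq
    split_ifs at heq with h1 h2 h2
    · have h := E1 _ _ heq
      exact Fin.ext (by simpa [Fin.ext_iff] using h)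
    · exact absurd heq.symm (E2 _)
    · exact absurd heq (E2 _)
    · have := k.isLt; have := l.isLt; exact Fin.ext (by omega)
  have := Fintype.card_le_of_injective _ hinj
  simpa using this

end LB


/-- For every `n ≥ 2`, the half-graph `H_{n,n}` satisfies `χso = n + 1` and
`αod = 2`; moreover every odd independent set with more than one element has the form
`{v_i, u_j}` with `i < j`. -/
theorem halfGraph_strongOddChromNum_oddIndepNum (n : ℕ) (hn : 2 ≤ n) :
    strongOddChromNum (halfGraph n) = n + 1 ∧
    oddIndepNum (halfGraph n) = 2 ∧
    ∀ S : Finset (Fin n ⊕ Fin n), IsOddIndepSet (halfGraph n) S → 1 < S.card →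
      ∃ i j : Fin n, i < j ∧ S = {Sum.inr i, Sum.inl j} := by
  refine ⟨?_, half_oddIndepNum hn, fun S hS hc => half_struct S hS hc⟩
  have hmem : n + 1 ∈ {k | ∃ c : (Fin n ⊕ Fin n) → Fin k,
      IsStrongOddColoring (halfGraph n) c} := ⟨halfCol n, halfCol_strong⟩
  refine le_antisymm (Nat.sInf_le hmem) (le_csInf ⟨n + 1, hmem⟩ ?_)
  rintro k ⟨c, hc⟩
  exact half_lb hn c hc
end

section
/- For all integers p, q ≥ 1, the Cartesian product H = K_p □ K_q of two complete graphs satisfies αod(H) = 1 and χso(H) = p·q. -/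
open Finset

instance boxProdDecidableRel
    {α β : Type*} [DecidableEq α] [DecidableEq β]
    (G : SimpleGraph α) (H : SimpleGraph β)
    [DecidableRel G.Adj] [DecidableRel H.Adj] :
    DecidableRel (G.boxProd H).Adj := fun x y =>
  inferInstanceAs (Decidable (G.Adj x.1 y.1 ∧ x.2 = y.2 ∨ H.Adj x.2 y.2 ∧ x.1 = y.1))

section Aux

lemma boxTop_adj {p q : ℕ} (x y : Fin p × Fin q) :
    ((⊤ : SimpleGraph (Fin p)).boxProd (⊤ : SimpleGraph (Fin q))).Adj x y ↔
      (x.1 ≠ y.1 ∧ x.2 = y.2) ∨ (x.2 ≠ y.2 ∧ x.1 = y.1) := by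
  simp [SimpleGraph.boxProd_adj]

lemma oddIndep_card_le_one {p q : ℕ} (S : Finset (Fin p × Fin q))
    (h : IsOddIndepSet ((⊤ : SimpleGraph (Fin p)).boxProd (⊤ : SimpleGraph (Fin q))) S) :
    S.card ≤ 1 := by
  by_contra hc
  push_neg at hc
  obtain ⟨a, ha, b, hb, hab⟩ := Finset.one_lt_card.mp hc
  have hnadj : ¬ ((⊤ : SimpleGraph (Fin p)).boxProd ⊤).Adj a b := h.1 a ha b hb
  rw [boxTop_adj] at hnadj
  push_neg at hnadj
  have h1 : a.1 ≠ b.1 := by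
    intro he
    rcases hnadj with ⟨hA, hB⟩
    exact hab (Prod.ext he (by by_contra h2; exact (hB h2) he))
  have h2 : a.2 ≠ b.2 := by
    intro he
    rcases hnadj with ⟨hA, hB⟩
    exact hab (Prod.ext (by by_contra h3; exact (hA h3) he) he)
  set w : Fin p × Fin q := (a.1, b.2) with hw
  have hwa : ((⊤ : SimpleGraph (Fin p)).boxProd ⊤).Adj w a := by
    rw [boxTop_adj]; exact Or.inr ⟨fun he => h2 he.symm, rfl⟩
  have hwb : ((⊤ : SimpleGraph (Fin p)).boxProd ⊤).Adj w b := by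
    rw [boxTop_adj]; exact Or.inl ⟨h1, rfl⟩
  have hwS : w ∉ S := by
    intro hwS
    exact h.1 w hwS a ha hwa
  have hfil : (S.filter fun u => ((⊤ : SimpleGraph (Fin p)).boxProd ⊤).Adj w u) = {a, b} := by
    ext x
    simp only [Finset.mem_filter, Finset.mem_insert, Finset.mem_singleton]
    constructor
    · rintro ⟨hxS, hadj⟩
      rw [boxTop_adj] at hadj
      rcases hadj with ⟨hne, heq⟩ | ⟨hne, heq⟩
      · -- x.2 = w.2 = b.2, x.1 ≠ a.1
        right
        by_contra hxb
        have : ((⊤ : SimpleGraph (Fin p)).boxProd ⊤).Adj x b := by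
          rw [boxTop_adj]
          exact Or.inl ⟨fun he => hxb (Prod.ext he heq.symm), heq.symm⟩
        exact h.1 x hxS b hb this
      · -- x.1 = w.1 = a.1
        left
        by_contra hxa
        have : ((⊤ : SimpleGraph (Fin p)).boxProd ⊤).Adj x a := by
          rw [boxTop_adj]
          exact Or.inr ⟨fun he => hxa (Prod.ext heq.symm he), heq.symm⟩
        exact h.1 x hxS a ha this
    · rintro (rfl | rfl)
      · exact ⟨ha, hwa⟩
      · exact ⟨hb, hwb⟩
  rcases h.2 w hwS with he | ho
  · rw [hfil] at he
    simp at he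
  · rw [hfil] at ho
    rw [Finset.card_pair hab] at ho
    rw [Nat.odd_iff] at ho; omega

lemma strongOdd_injective {p q n : ℕ} (c : Fin p × Fin q → Fin n)
    (h : IsStrongOddColoring ((⊤ : SimpleGraph (Fin p)).boxProd (⊤ : SimpleGraph (Fin q))) c) :
    Function.Injective c := by
  intro a b hcab
  by_contra hab
  have hnadj : ¬ ((⊤ : SimpleGraph (Fin p)).boxProd ⊤).Adj a b := by
    intro hadj; exact h.1 a b hadj hcab
  rw [boxTop_adj] at hnadj
  push_neg at hnadj
  have h1 : a.1 ≠ b.1 := by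
    intro he
    rcases hnadj with ⟨hA, hB⟩
    exact hab (Prod.ext he (by by_contra h2; exact (hB h2) he))
  have h2 : a.2 ≠ b.2 := by
    intro he
    rcases hnadj with ⟨hA, hB⟩
    exact hab (Prod.ext (by by_contra h3; exact (hA h3) he) he)
  set w : Fin p × Fin q := (a.1, b.2) with hw
  have hwa : ((⊤ : SimpleGraph (Fin p)).boxProd ⊤).Adj w a := by
    rw [boxTop_adj]; exact Or.inr ⟨fun he => h2 he.symm, rfl⟩
  have hwb : ((⊤ : SimpleGraph (Fin p)).boxProd ⊤).Adj w b := by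
    rw [boxTop_adj]; exact Or.inl ⟨h1, rfl⟩
  have hfil : (Finset.univ.filter fun u =>
      ((⊤ : SimpleGraph (Fin p)).boxProd ⊤).Adj w u ∧ c u = c a) = {a, b} := by
    ext x
    simp only [Finset.mem_filter, Finset.mem_univ, true_and, Finset.mem_insert,
      Finset.mem_singleton]
    constructor
    · rintro ⟨hadj, hcx⟩
      rw [boxTop_adj] at hadj
      rcases hadj with ⟨hne, heq⟩ | ⟨hne, heq⟩
      · right
        by_contra hxb
        have hadjxb : ((⊤ : SimpleGraph (Fin p)).boxProd ⊤).Adj x b := by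
          rw [boxTop_adj]
          exact Or.inl ⟨fun he => hxb (Prod.ext he heq.symm), heq.symm⟩
        exact h.1 x b hadjxb (hcx.trans hcab)
      · left
        by_contra hxa
        have hadjxa : ((⊤ : SimpleGraph (Fin p)).boxProd ⊤).Adj x a := by
          rw [boxTop_adj]
          exact Or.inr ⟨fun he => hxa (Prod.ext heq.symm he), heq.symm⟩
        exact h.1 x a hadjxa hcx
    · rintro (rfl | rfl)
      · exact ⟨hwa, rfl⟩
      · exact ⟨hwb, hcab.symm⟩
  rcases h.2 w (c a) with he | ho
  · rw [hfil] at he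
    simp at he
  · rw [hfil] at ho
    rw [Finset.card_pair hab] at ho
    rw [Nat.odd_iff] at ho; omega

end Aux

/-- For all `p, q ≥ 1`, the Cartesian product `H = K_p □ K_q` satisfies
`αod(H) = 1` and `χso(H) = p·q`. -/
theorem oddIndepNum_boxProd_complete (p q : ℕ) (hp : 1 ≤ p) (hq : 1 ≤ q) :
    oddIndepNum ((⊤ : SimpleGraph (Fin p)).boxProd (⊤ : SimpleGraph (Fin q))) = 1 ∧
    strongOddChromNum ((⊤ : SimpleGraph (Fin p)).boxProd (⊤ : SimpleGraph (Fin q))) = p * q := by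
  constructor
  · -- odd independence number = 1
    have hbound : ∀ k ∈ {k | ∃ S : Finset (Fin p × Fin q),
        IsOddIndepSet ((⊤ : SimpleGraph (Fin p)).boxProd (⊤ : SimpleGraph (Fin q))) S ∧
        S.card = k}, k ≤ 1 := by
      rintro k ⟨S, hS, rfl⟩
      exact oddIndep_card_le_one S hS
    have hmem : 1 ∈ {k | ∃ S : Finset (Fin p × Fin q),
        IsOddIndepSet ((⊤ : SimpleGraph (Fin p)).boxProd (⊤ : SimpleGraph (Fin q))) S ∧
        S.card = k} := by
      refine ⟨{(⟨0, hp⟩, ⟨0, hq⟩)}, ⟨?_, ?_⟩, Finset.card_singleton _⟩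
      · intro u hu v hv
        simp only [Finset.mem_singleton] at hu hv
        subst hu; subst hv
        exact fun hadj => (SimpleGraph.irrefl _) hadj
      · intro v hv
        rcases Finset.eq_empty_or_nonempty
            (({(⟨0, hp⟩, ⟨0, hq⟩)} : Finset (Fin p × Fin q)).filter
              fun u => ((⊤ : SimpleGraph (Fin p)).boxProd ⊤).Adj v u) with he | hne
        · exact Or.inl he
        · right
          have hsub : (({(⟨0, hp⟩, ⟨0, hq⟩)} : Finset (Fin p × Fin q)).filter
              fun u => ((⊤ : SimpleGraph (Fin p)).boxProd ⊤).Adj v u) ⊆ {(⟨0, hp⟩, ⟨0, hq⟩)} :=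
            Finset.filter_subset _ _
          have hle := Finset.card_le_card hsub
          rw [Finset.card_singleton] at hle
          have hpos := Finset.card_pos.mpr hne
          interval_cases h : (({(⟨0, hp⟩, ⟨0, hq⟩)} : Finset (Fin p × Fin q)).filter
              fun u => ((⊤ : SimpleGraph (Fin p)).boxProd ⊤).Adj v u).card
          exact ⟨0, by norm_num⟩
    unfold oddIndepNum
    exact le_antisymm (csSup_le ⟨1, hmem⟩ hbound) (le_csSup ⟨1, hbound⟩ hmem)
  · -- strong odd chromatic number = p * q
    have hmem : p * q ∈ {n | ∃ c : Fin p × Fin q → Fin n, IsStrongOddColoring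
        ((⊤ : SimpleGraph (Fin p)).boxProd (⊤ : SimpleGraph (Fin q))) c} := by
      refine ⟨fun v => finProdFinEquiv v, ?_, ?_⟩
      · intro u v hadj hcuv
        exact hadj.ne (finProdFinEquiv.injective hcuv)
      · intro v k
        set f := Finset.univ.filter fun u =>
          ((⊤ : SimpleGraph (Fin p)).boxProd ⊤).Adj v u ∧ finProdFinEquiv u = k with hf
        have hle : f.card ≤ 1 := by
          apply Finset.card_le_one.mpr
          intro a ha b hb
          simp only [hf, Finset.mem_filter] at ha hb
          exact finProdFinEquiv.injective (ha.2.2.trans hb.2.2.symm)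
        interval_cases h : f.card
        · exact Or.inl (Finset.card_eq_zero.mp h)
        · exact Or.inr ⟨0, by norm_num⟩
    unfold strongOddChromNum
    refine le_antisymm (Nat.sInf_le hmem) (le_csInf ⟨p * q, hmem⟩ ?_)
    rintro n ⟨c, hc⟩
    have := Fintype.card_le_of_injective c (strongOdd_injective c hc)
    simpa using this
end

section
/- Let G and H be finite simple graphs such that: (a) G admits a graph automorphism η with η(v) adjacent to v for every vertex v, and every orbit of η on the vertex set of G has even length; (b) H is bipartite and every vertex of H has even degree. Then the Cartesian product satisfies αod(G □ H) ≥ |V(H)| · αod(G). -/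
open Finset

open Finset in
private lemma filter_boxProd_split
    {V W : Type*} [DecidableEq V] [DecidableEq W]
    (G : SimpleGraph V) [DecidableRel G.Adj]
    (H : SimpleGraph W) [DecidableRel H.Adj]
    (S₁ S₂ : Finset V) (A B : Finset W)
    (hodd₁ : ∀ v ∉ S₁, (S₁.filter fun u => G.Adj v u) = ∅ ∨ Odd (S₁.filter fun u => G.Adj v u).card)
    (hcross : ∀ v ∈ S₂, (S₁.filter fun u => G.Adj v u) ≠ ∅)
    (hABdisj : ∀ w ∈ A, w ∉ B)
    (hdeg : ∀ w ∈ A, Even (B.filter fun w' => H.Adj w w').card)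
    (v : V) (w : W) (hw : w ∈ A)
    (hvw : (v, w) ∉ S₁ ×ˢ A ∪ S₂ ×ˢ B) :
    ((S₁ ×ˢ A ∪ S₂ ×ˢ B).filter fun p => (G.boxProd H).Adj (v, w) p) = ∅ ∨
      Odd ((S₁ ×ˢ A ∪ S₂ ×ˢ B).filter fun p => (G.boxProd H).Adj (v, w) p).card := by
  have hvS₁ : v ∉ S₁ := fun h =>
    hvw (by simp only [Finset.mem_union, Finset.mem_product]; exact Or.inl ⟨h, hw⟩)
  by_cases hv₂ : v ∈ S₂
  · have heq : ((S₁ ×ˢ A ∪ S₂ ×ˢ B).filter fun p => (G.boxProd H).Adj (v, w) p)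
        = (S₁.filter fun u => G.Adj v u).image (fun u => (u, w)) ∪
          (B.filter fun w' => H.Adj w w').image (fun w' => (v, w')) := by
      ext ⟨a, b⟩
      simp only [Finset.mem_filter, Finset.mem_union, Finset.mem_product, Finset.mem_image,
        SimpleGraph.boxProd_adj, Prod.mk.injEq]
      constructor
      · rintro ⟨hmem, ⟨hG, rfl⟩ | ⟨hH, rfl⟩⟩
        · rcases hmem with ⟨h1, _⟩ | ⟨_, h2⟩
          · exact Or.inl ⟨a, ⟨h1, hG⟩, rfl, rfl⟩
          · exact absurd h2 (hABdisj w hw)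
        · rcases hmem with ⟨h1, _⟩ | ⟨_, h2⟩
          · exact absurd h1 hvS₁
          · exact Or.inr ⟨b, ⟨h2, hH⟩, rfl, rfl⟩
      · rintro (⟨u, ⟨hu, hGu⟩, rfl, rfl⟩ | ⟨w', ⟨hw', hHw⟩, rfl, rfl⟩)
        · exact ⟨Or.inl ⟨hu, hw⟩, Or.inl ⟨hGu, rfl⟩⟩
        · exact ⟨Or.inr ⟨hv₂, hw'⟩, Or.inr ⟨hHw, rfl⟩⟩
    right
    rw [heq, Finset.card_union_of_disjoint, Finset.card_image_of_injective _
      (fun a b h => (Prod.mk.injEq _ _ _ _ ▸ h : a = b ∧ w = w).1),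
      Finset.card_image_of_injective _
      (fun a b h => (Prod.mk.injEq _ _ _ _ ▸ h : v = v ∧ a = b).2)]
    · have hNodd : Odd (S₁.filter fun u => G.Adj v u).card := by
        rcases hodd₁ v hvS₁ with h | h
        · exact absurd h (hcross v hv₂)
        · exact h
      exact hNodd.add_even (hdeg w hw)
    · rw [Finset.disjoint_left]
      rintro ⟨a, b⟩ hx hy
      simp only [Finset.mem_image, Finset.mem_filter, Prod.mk.injEq] at hx hy
      obtain ⟨u, _, _, rfl⟩ := hx
      obtain ⟨w', ⟨hw', hHw⟩, _, rfl⟩ := hy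
      exact hABdisj _ hw hw'
  · have heq : ((S₁ ×ˢ A ∪ S₂ ×ˢ B).filter fun p => (G.boxProd H).Adj (v, w) p)
        = (S₁.filter fun u => G.Adj v u).image (fun u => (u, w)) := by
      ext ⟨a, b⟩
      simp only [Finset.mem_filter, Finset.mem_union, Finset.mem_product, Finset.mem_image,
        SimpleGraph.boxProd_adj, Prod.mk.injEq]
      constructor
      · rintro ⟨hmem, ⟨hG, rfl⟩ | ⟨hH, rfl⟩⟩
        · rcases hmem with ⟨h1, _⟩ | ⟨_, h2⟩
          · exact ⟨a, ⟨h1, hG⟩, rfl, rfl⟩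
          · exact absurd h2 (hABdisj w hw)
        · rcases hmem with ⟨h1, _⟩ | ⟨h2, _⟩
          · exact absurd h1 hvS₁
          · exact absurd h2 hv₂
      · rintro ⟨u, ⟨hu, hGu⟩, rfl, rfl⟩
        exact ⟨Or.inl ⟨hu, hw⟩, Or.inl ⟨hGu, rfl⟩⟩
    rcases hodd₁ v hvS₁ with h | h
    · left; rw [heq, h, Finset.image_empty]
    · right
      rw [heq, Finset.card_image_of_injective _
        (fun a b h => (Prod.mk.injEq _ _ _ _ ▸ h : a = b ∧ w = w).1)]
      exact h

/-- If `G` admits an automorphism `η` with `η v` adjacent to `v` for every `v`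
whose orbits on `V(G)` all have even length, and `H` is bipartite with all degrees even, then
`αod(G □ H) ≥ |V(H)| · αod(G)`. -/
theorem oddIndepNum_boxProd_ge_of_automorphism
    {V W : Type*} [Fintype V] [DecidableEq V] [Fintype W] [DecidableEq W]
    (G : SimpleGraph V) [DecidableRel G.Adj]
    (H : SimpleGraph W) [DecidableRel H.Adj]
    (η : G ≃g G) (hadj : ∀ v : V, G.Adj v (η v))
    (horb : ∀ v : V, Even (Set.ncard {w : V | ∃ k : ℕ, (η.toEquiv ^ k) v = w}))
    (hbip : H.Colorable 2) (hdeg : ∀ w : W, Even (H.degree w)) :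
    Fintype.card W * oddIndepNum G ≤ oddIndepNum (G.boxProd H) := by
  classical
  -- a maximum odd independent set of G
  have hne : {k | ∃ S : Finset V, IsOddIndepSet G S ∧ S.card = k}.Nonempty :=
    ⟨0, ∅, ⟨by simp, fun v _ => Or.inl (by simp)⟩, by simp⟩
  have hbdd : BddAbove {k | ∃ S : Finset V, IsOddIndepSet G S ∧ S.card = k} := by
    refine ⟨Fintype.card V, ?_⟩
    rintro k ⟨S, _, rfl⟩
    exact le_trans S.card_le_univ (le_of_eq Finset.card_univ)
  obtain ⟨S, hS, hScard⟩ : ∃ S : Finset V, IsOddIndepSet G S ∧ S.card = oddIndepNum G :=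
    Nat.sSup_mem hne hbdd
  obtain ⟨hind, hodd⟩ := hS
  -- bipartition of H
  let c := hbip.some
  set A : Finset W := univ.filter (fun w => c w = 0) with hA
  set B : Finset W := univ.filter (fun w => c w = 1) with hB
  set S₂ : Finset V := S.image η with hS₂def
  have hη_inj : Function.Injective (⇑η) := η.toEquiv.injective
  have hfin2 : ∀ i : Fin 2, i = 0 ∨ i = 1 := by decide
  have hABfull : ∀ w : W, w ∈ A ∨ w ∈ B := by
    intro w
    rcases hfin2 (c w) with h | h
    · exact Or.inl (by simp [hA, h])
    · exact Or.inr (by simp [hB, h])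
  have hABdisjA : ∀ w ∈ A, w ∉ B := by
    intro w hwa hwb
    simp only [hA, hB, Finset.mem_filter] at hwa hwb
    rw [hwa.2] at hwb
    exact absurd hwb.2 (by decide)
  have hABdisjB : ∀ w ∈ B, w ∉ A := fun w hb ha => hABdisjA w ha hb
  have hABcrossA : ∀ w ∈ A, ∀ w', H.Adj w w' → w' ∈ B := by
    intro w hwa w' hadj'
    have hne' := c.valid hadj'
    simp only [hA, Finset.mem_filter] at hwa
    rcases hfin2 (c w') with h | h
    · exact absurd (hwa.2.trans h.symm) hne'
    · simp [hB, h]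
  have hABcrossB : ∀ w ∈ B, ∀ w', H.Adj w w' → w' ∈ A := by
    intro w hwb w' hadj'
    have hne' := c.valid hadj'
    simp only [hB, Finset.mem_filter] at hwb
    rcases hfin2 (c w') with h | h
    · simp [hA, h]
    · exact absurd (hwb.2.trans h.symm) hne'
  have hdegA : ∀ w ∈ A, Even ((B.filter fun w' => H.Adj w w').card) := by
    intro w hwa
    have : (B.filter fun w' => H.Adj w w') = H.neighborFinset w := by
      ext w'
      simp only [Finset.mem_filter, SimpleGraph.mem_neighborFinset]
      exact ⟨fun h => h.2, fun h => ⟨hABcrossA w hwa w' h, h⟩⟩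
    rw [this]
    exact hdeg w
  have hdegB : ∀ w ∈ B, Even ((A.filter fun w' => H.Adj w w').card) := by
    intro w hwb
    have : (A.filter fun w' => H.Adj w w') = H.neighborFinset w := by
      ext w'
      simp only [Finset.mem_filter, SimpleGraph.mem_neighborFinset]
      exact ⟨fun h => h.2, fun h => ⟨hABcrossB w hwb w' h, h⟩⟩
    rw [this]
    exact hdeg w
  -- properties of S₂ = η(S)
  have hdisj₂₁ : ∀ v ∈ S₂, v ∉ S := by
    intro v hv hvS
    obtain ⟨u, hu, rfl⟩ := Finset.mem_image.mp hv
    exact hind u hu (η u) hvS (hadj u)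
  have hdisj₁₂ : ∀ v ∈ S, v ∉ S₂ := fun v hv hv2 => hdisj₂₁ v hv2 hv
  have hcross₁ : ∀ v ∈ S₂, (S.filter fun u => G.Adj v u) ≠ ∅ := by
    intro v hv hemp
    obtain ⟨u, hu, rfl⟩ := Finset.mem_image.mp hv
    have : u ∈ S.filter fun x => G.Adj (η u) x :=
      Finset.mem_filter.mpr ⟨hu, (hadj u).symm⟩
    rw [hemp] at this
    exact absurd this (Finset.notMem_empty u)
  have hcross₂ : ∀ v ∈ S, (S₂.filter fun u => G.Adj v u) ≠ ∅ := by
    intro v hv hemp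
    have : η v ∈ S₂.filter fun x => G.Adj v x :=
      Finset.mem_filter.mpr ⟨Finset.mem_image_of_mem _ hv, hadj v⟩
    rw [hemp] at this
    exact absurd this (Finset.notMem_empty _)
  have hind₂ : ∀ u ∈ S₂, ∀ v ∈ S₂, ¬ G.Adj u v := by
    intro u hu v hv
    obtain ⟨a, ha, rfl⟩ := Finset.mem_image.mp hu
    obtain ⟨b, hb, rfl⟩ := Finset.mem_image.mp hv
    rw [η.map_adj_iff]
    exact hind a ha b hb
  have hfilter₂ : ∀ v : V, (S₂.filter fun u => G.Adj v u)
      = (S.filter fun u => G.Adj (η.symm v) u).image (⇑η) := by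
    intro v
    ext x
    simp only [Finset.mem_filter, Finset.mem_image, hS₂def]
    constructor
    · rintro ⟨⟨u, hu, rfl⟩, hGu⟩
      refine ⟨u, ⟨hu, ?_⟩, rfl⟩
      rw [← η.map_adj_iff, RelIso.apply_symm_apply]
      exact hGu
    · rintro ⟨u, ⟨hu, hGu⟩, rfl⟩
      refine ⟨⟨u, hu, rfl⟩, ?_⟩
      rw [← η.map_adj_iff, RelIso.apply_symm_apply] at hGu
      exact hGu
  have hodd₂ : ∀ v ∉ S₂, (S₂.filter fun u => G.Adj v u) = ∅ ∨
      Odd ((S₂.filter fun u => G.Adj v u).card) := by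
    intro v hv
    have hvS : η.symm v ∉ S := by
      intro h
      exact hv (by
        rw [hS₂def, Finset.mem_image]
        exact ⟨η.symm v, h, RelIso.apply_symm_apply _ _⟩)
    rcases hodd (η.symm v) hvS with h | h
    · left; rw [hfilter₂ v, h, Finset.image_empty]
    · right; rw [hfilter₂ v, Finset.card_image_of_injective _ hη_inj]; exact h
  -- the odd independent set in the box product
  set T : Finset (V × W) := S ×ˢ A ∪ S₂ ×ˢ B with hT
  have hTind : ∀ p ∈ T, ∀ q ∈ T, ¬ (G.boxProd H).Adj p q := by
    rintro ⟨a, b⟩ hp ⟨a', b'⟩ hq hpq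
    rw [SimpleGraph.boxProd_adj] at hpq
    simp only [hT, Finset.mem_union, Finset.mem_product] at hp hq
    rcases hpq with ⟨hG, h2⟩ | ⟨hH, h1⟩
    · dsimp at h2; subst h2
      rcases hp with ⟨ha, hb⟩ | ⟨ha, hb⟩ <;> rcases hq with ⟨ha', hb'⟩ | ⟨ha', hb'⟩
      · exact hind a ha a' ha' hG
      · exact hABdisjA b hb hb'
      · exact hABdisjA b hb' hb
      · exact hind₂ a ha a' ha' hG
    · dsimp at h1; subst h1
      rcases hp with ⟨ha, hb⟩ | ⟨ha, hb⟩ <;> rcases hq with ⟨ha', hb'⟩ | ⟨ha', hb'⟩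
      · exact c.valid hH (by
          simp only [hA, Finset.mem_filter] at hb hb'
          rw [hb.2, hb'.2])
      · exact hdisj₂₁ a ha' ha
      · exact hdisj₂₁ a ha ha'
      · exact c.valid hH (by
          simp only [hB, Finset.mem_filter] at hb hb'
          rw [hb.2, hb'.2])
  have hTodd : ∀ p ∉ T, (T.filter fun u => (G.boxProd H).Adj p u) = ∅ ∨
      Odd ((T.filter fun u => (G.boxProd H).Adj p u).card) := by
    rintro ⟨v, w⟩ hp
    rcases hABfull w with hw | hw
    · exact filter_boxProd_split G H S S₂ A B hodd hcross₁ hABdisjA hdegA v w hw hp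
    · rw [hT, Finset.union_comm]
      rw [hT, Finset.union_comm] at hp
      exact filter_boxProd_split G H S₂ S B A hodd₂ hcross₂ hABdisjB hdegB v w hw hp
  have hTcard : T.card = Fintype.card W * oddIndepNum G := by
    have hdisjT : Disjoint (S ×ˢ A) (S₂ ×ˢ B) := by
      rw [Finset.disjoint_left]
      rintro ⟨a, b⟩ hx hy
      rw [Finset.mem_product] at hx hy
      exact hABdisjA b hx.2 hy.2
    have hScard₂ : S₂.card = S.card := Finset.card_image_of_injective _ hη_inj
    have hABcard : A.card + B.card = Fintype.card W := by
      have : B = univ.filter (fun w => ¬ (c w = 0)) := by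
        ext w
        simp only [hB, Finset.mem_filter]
        constructor
        · rintro ⟨_, h⟩
          exact ⟨Finset.mem_univ w, by rw [h]; decide⟩
        · rintro ⟨_, h⟩
          rcases hfin2 (c w) with h' | h'
          · exact absurd h' h
          · exact ⟨Finset.mem_univ w, h'⟩
      rw [hA, this, Finset.card_filter_add_card_filter_not, Finset.card_univ]
    rw [hT, Finset.card_union_of_disjoint hdisjT, Finset.card_product, Finset.card_product,
      hScard₂, ← Nat.mul_add, hABcard, hScard, Nat.mul_comm]
  calc Fintype.card W * oddIndepNum G = T.card := hTcard.symm
    _ ≤ oddIndepNum (G.boxProd H) := by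
        apply le_csSup
        · refine ⟨Fintype.card (V × W), ?_⟩
          rintro k ⟨U, _, rfl⟩
          exact le_trans U.card_le_univ (le_of_eq Finset.card_univ)
        · exact ⟨T, ⟨hTind, hTodd⟩, rfl⟩
end

section
/- If G is a finite simple graph on n vertices with maximum degree Δ(G) ≥ 3, then (Δ(G)² − 1)·αod(G) ≥ n. -/
open Finset

namespace OddProofAux

variable {V : Type*} [Fintype V] [DecidableEq V]

/-- ball of radius 2 around x -/
def ball2 (G : SimpleGraph V) [DecidableRel G.Adj] (x : V) : Finset V :=
  univ.filter (fun v => v = x ∨ G.Adj x v ∨ ∃ w, G.Adj x w ∧ G.Adj w v)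

def cov (G : SimpleGraph V) [DecidableRel G.Adj] (S : Finset V) : Finset V :=
  S.biUnion (ball2 G)

variable {G : SimpleGraph V} [DecidableRel G.Adj]

lemma mem_ball2 {x v : V} :
    v ∈ ball2 G x ↔ (v = x ∨ G.Adj x v ∨ ∃ w, G.Adj x w ∧ G.Adj w v) := by
  simp [ball2]

lemma self_mem_ball2 (x : V) : x ∈ ball2 G x := mem_ball2.2 (Or.inl rfl)

lemma adj_mem_ball2 {x v : V} (h : G.Adj x v) : v ∈ ball2 G x := mem_ball2.2 (Or.inr (Or.inl h))

lemma dist2_mem_ball2 {x w v : V} (h1 : G.Adj x w) (h2 : G.Adj w v) : v ∈ ball2 G x :=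
  mem_ball2.2 (Or.inr (Or.inr ⟨w, h1, h2⟩))

lemma mem_cov {S : Finset V} {v : V} : v ∈ cov G S ↔ ∃ s ∈ S, v ∈ ball2 G s := by
  simp [cov]

lemma subset_cov (S : Finset V) : S ⊆ cov G S :=
  fun s hs => mem_cov.2 ⟨s, hs, self_mem_ball2 s⟩

lemma cov_union (S T : Finset V) : cov G (S ∪ T) = cov G S ∪ cov G T := by
  ext v
  simp only [cov, Finset.mem_biUnion, Finset.mem_union]
  constructor
  · rintro ⟨s, hs | hs, hv⟩
    · exact Or.inl ⟨s, hs, hv⟩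
    · exact Or.inr ⟨s, hs, hv⟩
  · rintro (⟨s, hs, hv⟩ | ⟨s, hs, hv⟩)
    · exact ⟨s, Or.inl hs, hv⟩
    · exact ⟨s, Or.inr hs, hv⟩

lemma card_filter_le_one_cases {s : Finset V} (h : s.card ≤ 1) : s = ∅ ∨ Odd s.card := by
  interval_cases h' : s.card
  · exact Or.inl (Finset.card_eq_zero.1 h')
  · exact Or.inr (by simp [h'])

/-- union of odd independent sets, far apart -/
lemma oddIndep_union {S T : Finset V} (hS : IsOddIndepSet G S) (hT : IsOddIndepSet G T)
    (hfar : ∀ t ∈ T, t ∉ cov G S) : IsOddIndepSet G (S ∪ T) := by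
  have hST : ∀ s ∈ S, ∀ t ∈ T, ¬ G.Adj s t := by
    intro s hs t ht hadj
    exact hfar t ht (mem_cov.2 ⟨s, hs, adj_mem_ball2 hadj⟩)
  constructor
  · intro u hu v hv
    rcases Finset.mem_union.1 hu with hu' | hu' <;> rcases Finset.mem_union.1 hv with hv' | hv'
    · exact hS.1 u hu' v hv'
    · exact hST u hu' v hv'
    · exact fun h => hST v hv' u hu' h.symm
    · exact hT.1 u hu' v hv'
  · intro v hv
    have hvS : v ∉ S := fun h => hv (Finset.mem_union_left _ h)
    have hvT : v ∉ T := fun h => hv (Finset.mem_union_right _ h)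
    have hsplit : (S ∪ T).filter (fun u => G.Adj v u) =
        S.filter (fun u => G.Adj v u) ∪ T.filter (fun u => G.Adj v u) :=
      Finset.filter_union _ _ _
    by_cases hTe : T.filter (fun u => G.Adj v u) = ∅
    · rw [hsplit, hTe, Finset.union_empty]
      exact hS.2 v hvS
    · have hSe : S.filter (fun u => G.Adj v u) = ∅ := by
        obtain ⟨t, ht⟩ := Finset.nonempty_iff_ne_empty.2 hTe
        rw [Finset.mem_filter] at ht
        rw [Finset.filter_eq_empty_iff]
        intro s hs hadj
        exact hfar t ht.1 (mem_cov.2 ⟨s, hs, dist2_mem_ball2 hadj.symm ht.2⟩)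
      rw [hsplit, hSe, Finset.empty_union]
      exact hT.2 v hvT

lemma oddIndep_singleton (x : V) : IsOddIndepSet G {x} := by
  constructor
  · intro u hu v hv
    rw [Finset.mem_singleton] at hu hv
    subst hu; subst hv; exact fun h => G.loopless.irrefl _ h
  · intro v _
    apply card_filter_le_one_cases
    exact le_trans (Finset.card_filter_le _ _) (by simp)

/-- basic ball bound -/
lemma card_ball2_le (x : V) : (ball2 G x).card ≤ 1 + G.degree x * G.maxDegree := by
  classical
  have hsub : ball2 G x ⊆ insert x ((G.neighborFinset x).biUnion
      (fun u => insert u ((G.neighborFinset u).erase x))) := by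
    intro v hv
    by_cases hvx : v = x
    · exact hvx ▸ Finset.mem_insert_self _ _
    rcases mem_ball2.1 hv with h | h | ⟨w, h1, h2⟩
    · exact absurd h hvx
    · refine Finset.mem_insert_of_mem (Finset.mem_biUnion.2 ⟨v, ?_, Finset.mem_insert_self _ _⟩)
      exact (SimpleGraph.mem_neighborFinset G x v).2 h
    · refine Finset.mem_insert_of_mem (Finset.mem_biUnion.2 ⟨w, ?_, ?_⟩)
      · exact (SimpleGraph.mem_neighborFinset G x w).2 h1
      · exact Finset.mem_insert_of_mem
          (Finset.mem_erase.2 ⟨hvx, (SimpleGraph.mem_neighborFinset G w v).2 h2⟩)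
  have key : ∀ u ∈ G.neighborFinset x,
      (insert u ((G.neighborFinset u).erase x)).card ≤ G.maxDegree := by
    intro u hu
    have hx : x ∈ G.neighborFinset u := by
      rw [SimpleGraph.mem_neighborFinset] at hu ⊢
      exact hu.symm
    have h1 : ((G.neighborFinset u).erase x).card = G.degree u - 1 :=
      Finset.card_erase_of_mem hx
    have h2 : 1 ≤ G.degree u := Finset.card_pos.2 ⟨x, hx⟩
    have h3 := G.degree_le_maxDegree u
    have h4 := Finset.card_insert_le u ((G.neighborFinset u).erase x)
    omega
  calc (ball2 G x).card ≤ _ := Finset.card_le_card hsub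
    _ ≤ 1 + ((G.neighborFinset x).biUnion
        (fun u => insert u ((G.neighborFinset u).erase x))).card := by
        have := Finset.card_insert_le x ((G.neighborFinset x).biUnion
          (fun u => insert u ((G.neighborFinset u).erase x)))
        omega
    _ ≤ 1 + ∑ u ∈ G.neighborFinset x, (insert u ((G.neighborFinset u).erase x)).card :=
        Nat.add_le_add_left Finset.card_biUnion_le 1
    _ ≤ 1 + ∑ _u ∈ G.neighborFinset x, G.maxDegree :=
        Nat.add_le_add_left (Finset.sum_le_sum key) 1
    _ = 1 + G.degree x * G.maxDegree := by
        rw [Finset.sum_const, smul_eq_mul]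
        rfl

lemma card_ball2_le' (x : V) : (ball2 G x).card ≤ G.maxDegree ^ 2 + 1 := by
  have h := card_ball2_le (G := G) x
  have h2 := G.degree_le_maxDegree x
  have h3 : G.degree x * G.maxDegree ≤ G.maxDegree * G.maxDegree :=
    Nat.mul_le_mul_right _ h2
  rw [pow_two]
  omega

lemma degree_eq_of_big_ball {x : V} (hD : 3 ≤ G.maxDegree)
    (hx : G.maxDegree ^ 2 ≤ (ball2 G x).card) : G.degree x = G.maxDegree := by
  have h := card_ball2_le (G := G) x
  have h2 := G.degree_le_maxDegree x
  rw [pow_two] at hx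
  by_contra hne
  have h3 : G.degree x ≤ G.maxDegree - 1 := by omega
  have h4 : G.degree x * G.maxDegree ≤ (G.maxDegree - 1) * G.maxDegree :=
    Nat.mul_le_mul_right _ h3
  rw [Nat.sub_mul, one_mul] at h4
  have h5 : G.maxDegree ≤ G.maxDegree * G.maxDegree := Nat.le_mul_of_pos_left _ (by omega)
  omega

variable (G) in
/-- vertices at distance exactly 2 (roughly) -/
def N2 (x : V) : Finset V := ball2 G x \ insert x (G.neighborFinset x)

variable (G) in
def sig (x y : V) : ℕ := ((G.neighborFinset x).filter (fun u => G.Adj y u)).card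

lemma ball_eq (x : V) : insert x (G.neighborFinset x) ∪ N2 G x = ball2 G x := by
  apply Finset.union_sdiff_of_subset
  intro v hv
  rcases Finset.mem_insert.1 hv with h | h
  · rw [h]; exact self_mem_ball2 x
  · exact adj_mem_ball2 ((SimpleGraph.mem_neighborFinset G x v).1 h)

lemma card_N2 (x : V) : (N2 G x).card = (ball2 G x).card - (G.degree x + 1) := by
  have hsub : insert x (G.neighborFinset x) ⊆ ball2 G x := by
    intro v hv
    rcases Finset.mem_insert.1 hv with h | h
    · rw [h]; exact self_mem_ball2 x
    · exact adj_mem_ball2 ((SimpleGraph.mem_neighborFinset G x v).1 h)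
  have hx : x ∉ G.neighborFinset x := by
    simp [SimpleGraph.mem_neighborFinset]
  rw [N2, Finset.card_sdiff_of_subset hsub, Finset.card_insert_of_notMem hx]
  rfl

lemma sig_pos {x y : V} (hy : y ∈ N2 G x) : 1 ≤ sig G x y := by
  rw [N2, Finset.mem_sdiff, Finset.mem_insert] at hy
  obtain ⟨hb, hni⟩ := hy
  push_neg at hni
  rcases mem_ball2.1 hb with h | h | ⟨w, h1, h2⟩
  · exact absurd h hni.1
  · exact absurd ((SimpleGraph.mem_neighborFinset G x y).2 h) hni.2
  · refine Finset.card_pos.2 ⟨w, Finset.mem_filter.2 ⟨?_, h2.symm⟩⟩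
    exact (SimpleGraph.mem_neighborFinset G x w).2 h1

lemma count_core {x : V} (hD : 3 ≤ G.maxDegree)
    (hx : G.maxDegree ^ 2 ≤ (ball2 G x).card) :
    G.maxDegree
      + (∑ u ∈ G.neighborFinset x,
          ((G.neighborFinset x).filter (fun w => G.Adj u w)).card)
      + ∑ y ∈ N2 G x, sig G x y
      ≤ G.maxDegree * G.maxDegree := by
  have hdeg : G.degree x = G.maxDegree := degree_eq_of_big_ball hD hx
  -- pointwise bound
  have key : ∀ u ∈ G.neighborFinset x,
      1 + ((G.neighborFinset x).filter (fun w => G.Adj u w)).card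
        + ((N2 G x).filter (fun y => G.Adj u y)).card ≤ G.maxDegree := by
    intro u hu
    have hadjxu : G.Adj x u := (SimpleGraph.mem_neighborFinset G x u).1 hu
    have hdisj : Disjoint ((G.neighborFinset x).filter (fun w => G.Adj u w))
        ((N2 G x).filter (fun y => G.Adj u y)) := by
      rw [Finset.disjoint_left]
      intro a ha hb
      have ha' := (Finset.mem_filter.1 ha).1
      have hb' := (Finset.mem_filter.1 hb).1
      rw [N2, Finset.mem_sdiff] at hb'
      exact hb'.2 (Finset.mem_insert_of_mem ha')
    have hxmem : x ∉ ((G.neighborFinset x).filter (fun w => G.Adj u w))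
        ∪ ((N2 G x).filter (fun y => G.Adj u y)) := by
      intro hmem
      rcases Finset.mem_union.1 hmem with h | h
      · have := (Finset.mem_filter.1 h).1
        simp [SimpleGraph.mem_neighborFinset] at this
      · have := (Finset.mem_filter.1 h).1
        rw [N2, Finset.mem_sdiff] at this
        exact this.2 (Finset.mem_insert_self x _)
    have hsub : insert x (((G.neighborFinset x).filter (fun w => G.Adj u w))
        ∪ ((N2 G x).filter (fun y => G.Adj u y))) ⊆ G.neighborFinset u := by
      intro v hv
      rcases Finset.mem_insert.1 hv with h | h
      · subst h
        exact (SimpleGraph.mem_neighborFinset G u v).2 hadjxu.symm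
      rcases Finset.mem_union.1 h with h' | h'
      · exact (SimpleGraph.mem_neighborFinset G u v).2 (Finset.mem_filter.1 h').2
      · exact (SimpleGraph.mem_neighborFinset G u v).2 (Finset.mem_filter.1 h').2
    have hc := Finset.card_le_card hsub
    rw [Finset.card_insert_of_notMem hxmem, Finset.card_union_of_disjoint hdisj] at hc
    have := G.degree_le_maxDegree u
    unfold SimpleGraph.degree at this
    omega
  -- sum the pointwise bound
  have hsum : ∑ u ∈ G.neighborFinset x,
      (1 + ((G.neighborFinset x).filter (fun w => G.Adj u w)).card
        + ((N2 G x).filter (fun y => G.Adj u y)).card)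
      ≤ ∑ _u ∈ G.neighborFinset x, G.maxDegree := Finset.sum_le_sum key
  rw [Finset.sum_const, smul_eq_mul] at hsum
  have hcard : (G.neighborFinset x).card = G.maxDegree := hdeg
  rw [hcard] at hsum
  -- swap double counting
  have hswap : ∑ u ∈ G.neighborFinset x, ((N2 G x).filter (fun y => G.Adj u y)).card
      = ∑ y ∈ N2 G x, sig G x y := by
    simp only [Finset.card_filter, sig]
    rw [Finset.sum_comm]
    refine Finset.sum_congr rfl fun y _ => Finset.sum_congr rfl fun u _ => ?_
    by_cases h : G.Adj u y
    · simp [h, h.symm]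
    · have h' : ¬ G.Adj y u := fun hh => h hh.symm
      simp [h, h']
  rw [Finset.sum_add_distrib, Finset.sum_add_distrib, Finset.sum_const, smul_eq_mul,
    mul_one, hcard, hswap] at hsum
  omega

lemma sum_sig_le {x : V} (hD : 3 ≤ G.maxDegree)
    (hx : G.maxDegree ^ 2 ≤ (ball2 G x).card) :
    G.maxDegree + ∑ y ∈ N2 G x, sig G x y ≤ G.maxDegree * G.maxDegree := by
  have := count_core hD hx
  omega

lemma card_N2_ge {x : V} (hD : 3 ≤ G.maxDegree)
    (hx : G.maxDegree ^ 2 ≤ (ball2 G x).card) :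
    G.maxDegree * G.maxDegree ≤ (N2 G x).card + G.maxDegree + 1 := by
  have h1 := card_N2 (G := G) x
  have h2 : G.degree x = G.maxDegree := degree_eq_of_big_ball hD hx
  rw [pow_two] at hx
  omega

lemma sum_sig_ge_card {x : V} : (N2 G x).card ≤ ∑ y ∈ N2 G x, sig G x y := by
  calc (N2 G x).card = ∑ _y ∈ N2 G x, 1 := by simp
    _ ≤ _ := Finset.sum_le_sum fun y hy => sig_pos hy

lemma N1_indep {x : V} (hD : 3 ≤ G.maxDegree)
    (hx : G.maxDegree ^ 2 ≤ (ball2 G x).card) :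
    ∀ u ∈ G.neighborFinset x, ∀ w ∈ G.neighborFinset x, ¬ G.Adj u w := by
  intro u hu w hw hadj
  have hne : u ≠ w := G.ne_of_adj hadj
  have hcore := count_core hD hx
  have hE : 2 ≤ ∑ u' ∈ G.neighborFinset x,
      ((G.neighborFinset x).filter (fun w' => G.Adj u' w')).card := by
    have hpair : ({u, w} : Finset V) ⊆ G.neighborFinset x := by
      intro a ha
      rcases Finset.mem_insert.1 ha with h | h
      · exact h ▸ hu
      · exact (Finset.mem_singleton.1 h) ▸ hw
    have h1 : 1 ≤ ((G.neighborFinset x).filter (fun w' => G.Adj u w')).card :=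
      Finset.card_pos.2 ⟨w, Finset.mem_filter.2 ⟨hw, hadj⟩⟩
    have h2 : 1 ≤ ((G.neighborFinset x).filter (fun w' => G.Adj w w')).card :=
      Finset.card_pos.2 ⟨u, Finset.mem_filter.2 ⟨hu, hadj.symm⟩⟩
    calc 2 ≤ ∑ u' ∈ ({u, w} : Finset V),
          ((G.neighborFinset x).filter (fun w' => G.Adj u' w')).card := by
          rw [Finset.sum_pair hne]; omega
      _ ≤ _ := Finset.sum_le_sum_of_subset hpair
  have hS := sum_sig_ge_card (G := G) (x := x)
  have hN2 := card_N2_ge hD hx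
  have h3 : 3 * G.maxDegree ≤ G.maxDegree * G.maxDegree := Nat.mul_le_mul_right _ hD
  omega

lemma sig_le_two {x : V} (hD : 3 ≤ G.maxDegree)
    (hx : G.maxDegree ^ 2 ≤ (ball2 G x).card) {y : V} (hy : y ∈ N2 G x) :
    sig G x y ≤ 2 := by
  by_contra hgt
  have hsum : (N2 G x).card - 1 + 3 ≤ ∑ y' ∈ N2 G x, sig G x y' := by
    have herase : (N2 G x).card - 1 ≤ ∑ y' ∈ (N2 G x).erase y, sig G x y' := by
      calc (N2 G x).card - 1 = ((N2 G x).erase y).card := (Finset.card_erase_of_mem hy).symm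
        _ = ∑ _y' ∈ (N2 G x).erase y, 1 := by simp
        _ ≤ _ := Finset.sum_le_sum fun y' hy' => sig_pos (Finset.mem_of_mem_erase hy')
    have := Finset.sum_erase_add (N2 G x) (sig G x) hy
    omega
  have h1 := sum_sig_le hD hx
  have h2 := card_N2_ge hD hx
  have h3 : 1 ≤ (N2 G x).card := by
    have h4 : 3 * G.maxDegree ≤ G.maxDegree * G.maxDegree := Nat.mul_le_mul_right _ hD
    omega
  omega

lemma heavy_unique {x : V} (hD : 3 ≤ G.maxDegree)
    (hx : G.maxDegree ^ 2 ≤ (ball2 G x).card) {y₁ y₂ : V}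
    (hy₁ : y₁ ∈ N2 G x) (hy₂ : y₂ ∈ N2 G x)
    (h₁ : 2 ≤ sig G x y₁) (h₂ : 2 ≤ sig G x y₂) : y₁ = y₂ := by
  by_contra hne
  have hy₂' : y₂ ∈ (N2 G x).erase y₁ := Finset.mem_erase.2 ⟨fun h => hne h.symm, hy₂⟩
  have hsum : (N2 G x).card - 2 + 4 ≤ ∑ y' ∈ N2 G x, sig G x y' := by
    have e1 := Finset.sum_erase_add (N2 G x) (sig G x) hy₁
    have e2 := Finset.sum_erase_add ((N2 G x).erase y₁) (sig G x) hy₂'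
    have herase : (N2 G x).card - 2 ≤ ∑ y' ∈ ((N2 G x).erase y₁).erase y₂, sig G x y' := by
      calc (N2 G x).card - 2 = (((N2 G x).erase y₁).erase y₂).card := by
            rw [Finset.card_erase_of_mem hy₂', Finset.card_erase_of_mem hy₁]
            omega
        _ = ∑ _y' ∈ ((N2 G x).erase y₁).erase y₂, 1 := by simp
        _ ≤ _ := Finset.sum_le_sum fun y' hy' => sig_pos
            (Finset.mem_of_mem_erase (Finset.mem_of_mem_erase hy'))
    omega
  have h1 := sum_sig_le hD hx
  have h2 := card_N2_ge hD hx
  have h3 : 2 ≤ (N2 G x).card := by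
    have h4 : 3 * G.maxDegree ≤ G.maxDegree * G.maxDegree := Nat.mul_le_mul_right _ hD
    omega
  omega

lemma no_heavy_of_full {x : V} (hD : 3 ≤ G.maxDegree)
    (hx : G.maxDegree ^ 2 + 1 ≤ (ball2 G x).card) {y : V} (hy : y ∈ N2 G x) :
    sig G x y ≤ 1 := by
  by_contra hgt
  have hx' : G.maxDegree ^ 2 ≤ (ball2 G x).card := by omega
  have hsum : (N2 G x).card - 1 + 2 ≤ ∑ y' ∈ N2 G x, sig G x y' := by
    have herase : (N2 G x).card - 1 ≤ ∑ y' ∈ (N2 G x).erase y, sig G x y' := by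
      calc (N2 G x).card - 1 = ((N2 G x).erase y).card := (Finset.card_erase_of_mem hy).symm
        _ = ∑ _y' ∈ (N2 G x).erase y, 1 := by simp
        _ ≤ _ := Finset.sum_le_sum fun y' hy' => sig_pos (Finset.mem_of_mem_erase hy')
    have := Finset.sum_erase_add (N2 G x) (sig G x) hy
    omega
  have h1 := sum_sig_le hD hx'
  have h2 := card_N2 (G := G) x
  have hdeg : G.degree x = G.maxDegree := degree_eq_of_big_ball hD hx'
  rw [pow_two] at hx
  have h3 : 1 ≤ (N2 G x).card := by
    have h4 : 3 * G.maxDegree ≤ G.maxDegree * G.maxDegree := Nat.mul_le_mul_right _ hD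
    omega
  omega

variable (G) in
def GoodTriple (x : V) (A : Finset V) : Prop :=
  A ⊆ G.neighborFinset x ∧ A.card = 3 ∧
  (∀ u ∈ A, ∀ w ∈ A, ¬ G.Adj u w) ∧
  ∀ v : V, v ≠ x → v ∉ A → (A.filter (fun u => G.Adj v u)).card ≤ 1

lemma exists_goodTriple {x : V} (hD : 3 ≤ G.maxDegree)
    (hx : G.maxDegree ^ 2 ≤ (ball2 G x).card)
    (h4 : 4 ≤ G.maxDegree ∨ ∀ y ∈ N2 G x, sig G x y ≤ 1) :
    ∃ A, GoodTriple G x A := by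
  have hdeg : G.degree x = G.maxDegree := degree_eq_of_big_ball hD hx
  have hindep := N1_indep hD hx
  by_cases hheavy : ∃ y ∈ N2 G x, 2 ≤ sig G x y
  · obtain ⟨y₀, hy₀, hs₀⟩ := hheavy
    have hD4 : 4 ≤ G.maxDegree := by
      rcases h4 with h | h
      · exact h
      · exact absurd (h y₀ hy₀) (by omega)
    obtain ⟨u₀, hu₀⟩ : ((G.neighborFinset x).filter (fun u => G.Adj y₀ u)).Nonempty := by
      apply Finset.card_pos.1
      have : sig G x y₀ = ((G.neighborFinset x).filter (fun u => G.Adj y₀ u)).card := rfl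
      omega
    have hcard : 3 ≤ ((G.neighborFinset x).erase u₀).card := by
      rw [Finset.card_erase_of_mem (Finset.mem_filter.1 hu₀).1]
      have : (G.neighborFinset x).card = G.maxDegree := hdeg
      omega
    obtain ⟨A, hA, hAcard⟩ := Finset.exists_subset_card_eq hcard
    have hAN1 : A ⊆ G.neighborFinset x := hA.trans (Finset.erase_subset _ _)
    refine ⟨A, hAN1, hAcard, fun u hu w hw => hindep u (hAN1 hu) w (hAN1 hw), ?_⟩
    intro v hvx hvA
    by_cases hvb : v ∈ ball2 G x
    · by_cases hvN1 : v ∈ G.neighborFinset x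
      · have he : A.filter (fun u => G.Adj v u) = ∅ := by
          rw [Finset.filter_eq_empty_iff]
          intro a ha
          exact hindep v hvN1 a (hAN1 ha)
        simp [he]
      · have hvN2 : v ∈ N2 G x := by
          rw [N2, Finset.mem_sdiff, Finset.mem_insert]
          exact ⟨hvb, by push_neg; exact ⟨hvx, hvN1⟩⟩
        by_cases hv2 : 2 ≤ sig G x v
        · have hveq : v = y₀ := heavy_unique hD hx hvN2 hy₀ hv2 hs₀
          subst hveq
          have hsub : A.filter (fun u => G.Adj v u) ⊆
              ((G.neighborFinset x).filter (fun u => G.Adj v u)).erase u₀ := by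
            intro a ha
            have h1 := Finset.mem_filter.1 ha
            exact Finset.mem_erase.2 ⟨(Finset.mem_erase.1 (hA h1.1)).1,
              Finset.mem_filter.2 ⟨hAN1 h1.1, h1.2⟩⟩
          have h2 : (((G.neighborFinset x).filter (fun u => G.Adj v u)).erase u₀).card
              = sig G x v - 1 := by
            rw [Finset.card_erase_of_mem hu₀]
            rfl
          have h3 := sig_le_two hD hx hvN2
          have h5 := Finset.card_le_card hsub
          omega
        · have h1 : (A.filter (fun u => G.Adj v u)).card ≤ sig G x v :=
            Finset.card_le_card (Finset.filter_subset_filter _ hAN1)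
          omega
    · have he : A.filter (fun u => G.Adj v u) = ∅ := by
        rw [Finset.filter_eq_empty_iff]
        intro a ha hadj
        exact hvb (dist2_mem_ball2
          ((SimpleGraph.mem_neighborFinset G x a).1 (hAN1 ha)) hadj.symm)
      simp [he]
  · push_neg at hheavy
    have hcard : 3 ≤ (G.neighborFinset x).card := by
      have : (G.neighborFinset x).card = G.maxDegree := hdeg
      omega
    obtain ⟨A, hA, hAcard⟩ := Finset.exists_subset_card_eq hcard
    refine ⟨A, hA, hAcard, fun u hu w hw => hindep u (hA hu) w (hA hw), ?_⟩
    intro v hvx hvA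
    by_cases hvb : v ∈ ball2 G x
    · by_cases hvN1 : v ∈ G.neighborFinset x
      · have he : A.filter (fun u => G.Adj v u) = ∅ := by
          rw [Finset.filter_eq_empty_iff]
          intro a ha
          exact hindep v hvN1 a (hA ha)
        simp [he]
      · have hvN2 : v ∈ N2 G x := by
          rw [N2, Finset.mem_sdiff, Finset.mem_insert]
          exact ⟨hvb, by push_neg; exact ⟨hvx, hvN1⟩⟩
        have h1 : (A.filter (fun u => G.Adj v u)).card ≤ sig G x v :=
          Finset.card_le_card (Finset.filter_subset_filter _ hA)
        have h2 := hheavy v hvN2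
        omega
    · have he : A.filter (fun u => G.Adj v u) = ∅ := by
        rw [Finset.filter_eq_empty_iff]
        intro a ha hadj
        exact hvb (dist2_mem_ball2
          ((SimpleGraph.mem_neighborFinset G x a).1 (hA ha)) hadj.symm)
      simp [he]

lemma goodTriple_oddIndep {x : V} {A : Finset V} (h : GoodTriple G x A) :
    IsOddIndepSet G A := by
  obtain ⟨hA, hcard, hindep, hcount⟩ := h
  refine ⟨hindep, ?_⟩
  intro v hv
  by_cases hvx : v = x
  · subst hvx
    have he : A.filter (fun u => G.Adj v u) = A :=
      Finset.filter_true_of_mem fun a ha => (SimpleGraph.mem_neighborFinset G v a).1 (hA ha)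
    rw [he, hcard]
    exact Or.inr ⟨1, by norm_num⟩
  · exact card_filter_le_one_cases (hcount v hvx hv)

lemma oddIndep_pair {x t : V} (ht : t ∉ ball2 G x) :
    IsOddIndepSet G {x, t} := by
  have hne : x ≠ t := fun h => ht (by rw [← h]; exact self_mem_ball2 x)
  have hnadj : ¬ G.Adj x t := fun h => ht (adj_mem_ball2 h)
  have hnc : ∀ v, ¬ (G.Adj v x ∧ G.Adj v t) := by
    rintro v ⟨h1, h2⟩
    exact ht (dist2_mem_ball2 h1.symm h2)
  constructor
  · intro u hu w hw hadj
    simp only [Finset.mem_insert, Finset.mem_singleton] at hu hw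
    rcases hu with h | h <;> rcases hw with h' | h' <;> subst h <;> subst h'
    · exact G.loopless.irrefl _ hadj
    · exact hnadj hadj
    · exact hnadj hadj.symm
    · exact G.loopless.irrefl _ hadj
  · intro v _
    apply card_filter_le_one_cases
    rw [Finset.card_le_one]
    intro a ha b hb
    have ha' := Finset.mem_filter.1 ha
    have hb' := Finset.mem_filter.1 hb
    rcases Finset.mem_insert.1 ha'.1 with h1 | h1 <;>
      rcases Finset.mem_insert.1 hb'.1 with h2 | h2
    · rw [h1, h2]
    · rw [Finset.mem_singleton] at h2
      subst h1; subst h2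
      exact absurd ⟨ha'.2, hb'.2⟩ (hnc v)
    · rw [Finset.mem_singleton] at h1
      subst h1; subst h2
      exact absurd ⟨hb'.2, ha'.2⟩ (hnc v)
    · rw [Finset.mem_singleton] at h1 h2
      rw [h1, h2]

lemma regime {S : Finset V} (hA : ∀ z, z ∉ cov G S → ((ball2 G z) ∩ cov G S).card ≤ 1) :
    ∀ z, z ∉ cov G S → (ball2 G z) ∩ cov G S = ∅ := by
  intro z hz
  by_contra hne
  obtain ⟨y, hy⟩ := Finset.nonempty_iff_ne_empty.2 hne
  rw [Finset.mem_inter] at hy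
  obtain ⟨hyz, hycov⟩ := hy
  have two : ∀ z' : V, z' ∉ cov G S → ∀ a b : V, a ≠ b → a ∈ ball2 G z' → b ∈ ball2 G z' →
      a ∈ cov G S → b ∈ cov G S → False := by
    intro z' hz' a b hab ha hb hac hbc
    have h2 : 1 < ((ball2 G z') ∩ cov G S).card :=
      Finset.one_lt_card.2 ⟨a, Finset.mem_inter.2 ⟨ha, hac⟩,
        b, Finset.mem_inter.2 ⟨hb, hbc⟩, hab⟩
    have h3 := hA z' hz'
    omega
  obtain ⟨s, hsS, hys⟩ := mem_cov.1 hycov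
  have len3 : ∀ z' p q s', z' ∉ cov G S → s' ∈ S →
      G.Adj z' p → G.Adj p q → G.Adj q s' → False := by
    intro z' p q s' hz' hs' h1 h2 h3
    refine two z' hz' p q (G.ne_of_adj h2) (adj_mem_ball2 h1) (dist2_mem_ball2 h1 h2) ?_ ?_
    · exact mem_cov.2 ⟨s', hs', dist2_mem_ball2 h3.symm h2.symm⟩
    · exact mem_cov.2 ⟨s', hs', adj_mem_ball2 h3.symm⟩
  rcases mem_ball2.1 hyz with h | h | ⟨a, ha1, ha2⟩
  · subst h
    exact hz hycov
  · rcases mem_ball2.1 hys with h' | h' | ⟨b, hb1, hb2⟩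
    · exact hz (mem_cov.2 ⟨s, hsS, adj_mem_ball2 (h' ▸ h).symm⟩)
    · exact hz (mem_cov.2 ⟨s, hsS, dist2_mem_ball2 h' h.symm⟩)
    · exact len3 z y b s hz hsS h hb2.symm hb1.symm
  · rcases mem_ball2.1 hys with h' | h' | ⟨b, hb1, hb2⟩
    · exact hz (mem_cov.2 ⟨s, hsS, dist2_mem_ball2 (h' ▸ ha2).symm ha1.symm⟩)
    · exact len3 z a y s hz hsS ha1 ha2 h'.symm
    · by_cases hac : a ∈ cov G S
      · obtain ⟨s', hs', has'⟩ := mem_cov.1 hac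
        rcases mem_ball2.1 has' with h'' | h'' | ⟨c, hc1, hc2⟩
        · exact hz (mem_cov.2 ⟨s', hs', adj_mem_ball2 (h'' ▸ ha1).symm⟩)
        · exact hz (mem_cov.2 ⟨s', hs', dist2_mem_ball2 h'' ha1.symm⟩)
        · exact len3 z a c s' hz hs' ha1 hc2.symm hc1.symm
      · refine two a hac y b (fun hyb => (G.ne_of_adj hb2) hyb.symm)
          (adj_mem_ball2 ha2) (dist2_mem_ball2 ha2 hb2.symm) hycov
          (mem_cov.2 ⟨s, hsS, adj_mem_ball2 hb1⟩)

lemma parity_contradiction {K : Finset V}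
    (hclosed : ∀ v ∈ K, ∀ w, G.Adj v w → w ∈ K)
    (hdeg : ∀ v ∈ K, G.degree v = 3) (hcard : K.card = 9) : False := by
  classical
  let G' : SimpleGraph {v // v ∈ K} :=
    { Adj := fun a b => G.Adj a.1 b.1
      symm := ⟨fun a b h => h.symm⟩
      loopless := ⟨fun a h => G.loopless.irrefl a.1 h⟩ }
  haveI : DecidableRel G'.Adj := fun a b => inferInstanceAs (Decidable (G.Adj a.1 b.1))
  have hdeg' : ∀ a : {v // v ∈ K}, G'.degree a = 3 := by
    intro a
    rw [← hdeg a.1 a.2]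
    unfold SimpleGraph.degree
    refine Finset.card_bij (fun (b : {v // v ∈ K}) (_ : b ∈ G'.neighborFinset a) => (b : V)) ?_ ?_ ?_
    · intro b hb
      rw [SimpleGraph.mem_neighborFinset] at hb ⊢
      exact hb
    · intro b1 h1 b2 h2 h
      exact Subtype.ext h
    · intro w hw
      rw [SimpleGraph.mem_neighborFinset] at hw
      exact ⟨⟨w, hclosed a.1 a.2 w hw⟩,
        by rw [SimpleGraph.mem_neighborFinset]; exact hw, rfl⟩
  have hhs := SimpleGraph.sum_degrees_eq_twice_card_edges G'
  rw [Finset.sum_congr rfl (fun a _ => hdeg' a), Finset.sum_const, smul_eq_mul] at hhs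
  have hcardK : (univ : Finset {v // v ∈ K}).card = 9 := by
    rw [Finset.card_univ, Fintype.card_coe]
    exact hcard
  rw [hcardK] at hhs
  omega

lemma card_union_sdiff (a b : Finset V) : (a ∪ b).card = a.card + (b \ a).card := by
  rw [← Finset.card_union_of_disjoint Finset.disjoint_sdiff, Finset.union_sdiff_self_eq_union]

lemma extend_step {S T : Finset V} (hS : IsOddIndepSet G S) (hT : IsOddIndepSet G T)
    (hfar : ∀ t ∈ T, t ∉ cov G S) (hTne : T.Nonempty)
    (hinv : (cov G S).card ≤ (G.maxDegree ^ 2 - 1) * S.card)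
    (hcost : (cov G T \ cov G S).card ≤ (G.maxDegree ^ 2 - 1) * T.card) :
    IsOddIndepSet G (S ∪ T) ∧
    (cov G (S ∪ T)).card ≤ (G.maxDegree ^ 2 - 1) * (S ∪ T).card ∧
    (univ \ cov G (S ∪ T)).card < (univ \ cov G S).card := by
  have hdisj : Disjoint S T := by
    rw [Finset.disjoint_right]
    exact fun {t} ht hts => hfar t ht (subset_cov S hts)
  refine ⟨oddIndep_union hS hT hfar, ?_, ?_⟩
  · calc (cov G (S ∪ T)).card = (cov G S ∪ cov G T).card := by rw [cov_union]
      _ = (cov G S).card + (cov G T \ cov G S).card := card_union_sdiff _ _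
      _ ≤ (G.maxDegree ^ 2 - 1) * S.card + (G.maxDegree ^ 2 - 1) * T.card :=
          Nat.add_le_add hinv hcost
      _ = (G.maxDegree ^ 2 - 1) * (S.card + T.card) := (Nat.mul_add _ _ _).symm
      _ = (G.maxDegree ^ 2 - 1) * (S ∪ T).card := by
          rw [Finset.card_union_of_disjoint hdisj]
  · obtain ⟨t, ht⟩ := hTne
    have hsub : univ \ cov G (S ∪ T) ⊆ univ \ cov G S := by
      intro v hv
      rw [Finset.mem_sdiff] at hv ⊢
      exact ⟨hv.1, fun h => hv.2 (by rw [cov_union]; exact Finset.mem_union_left _ h)⟩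
    apply Finset.card_lt_card
    rw [Finset.ssubset_def]
    refine ⟨hsub, fun hsub' => ?_⟩
    have htmem : t ∈ univ \ cov G S := Finset.mem_sdiff.2 ⟨Finset.mem_univ t, hfar t ht⟩
    have h2 := hsub' htmem
    rw [Finset.mem_sdiff] at h2
    exact h2.2 (by rw [cov_union]; exact Finset.mem_union_right _ (subset_cov T ht))

lemma finish {S : Finset V} (hS : IsOddIndepSet G S)
    (hinv : (cov G S).card ≤ (G.maxDegree ^ 2 - 1) * S.card)
    (hunc : univ \ cov G S = ∅) :
    Fintype.card V ≤ (G.maxDegree ^ 2 - 1) * S.card := by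
  have hsub : (univ : Finset V) ⊆ cov G S := by
    intro v hv
    by_contra h
    have hmem : v ∈ univ \ cov G S := Finset.mem_sdiff.2 ⟨hv, h⟩
    rw [hunc] at hmem
    exact Finset.notMem_empty v hmem
  calc Fintype.card V = (univ : Finset V).card := Finset.card_univ.symm
    _ ≤ (cov G S).card := Finset.card_le_card hsub
    _ ≤ _ := hinv

lemma main_induction (hD : 3 ≤ G.maxDegree) :
    ∀ k : ℕ, ∀ S : Finset V, IsOddIndepSet G S →
      (cov G S).card ≤ (G.maxDegree ^ 2 - 1) * S.card →
      (univ \ cov G S).card ≤ k →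
      ∃ T : Finset V, IsOddIndepSet G T ∧
        Fintype.card V ≤ (G.maxDegree ^ 2 - 1) * T.card := by
  intro k
  induction k with
  | zero =>
    intro S hS hinv hunc
    exact ⟨S, hS, finish hS hinv (Finset.card_eq_zero.1 (Nat.le_zero.1 hunc))⟩
  | succ k ih =>
    intro S hS hinv hunc
    by_cases hdone : univ \ cov G S = ∅
    · exact ⟨S, hS, finish hS hinv hdone⟩
    have h3D : 3 * G.maxDegree ≤ G.maxDegree ^ 2 := by nlinarith
    have h9 : 9 ≤ G.maxDegree ^ 2 := by nlinarith
    obtain ⟨T, hT, hfar, hTne, hcost⟩ : ∃ T : Finset V, IsOddIndepSet G T ∧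
        (∀ t ∈ T, t ∉ cov G S) ∧ T.Nonempty ∧
        (cov G T \ cov G S).card ≤ (G.maxDegree ^ 2 - 1) * T.card := by
      by_cases hA : ∃ z, z ∉ cov G S ∧ 2 ≤ ((ball2 G z) ∩ cov G S).card
      · -- Step A: a vertex whose ball already meets the covered region twice
        obtain ⟨x, hxc, hx2⟩ := hA
        refine ⟨{x}, oddIndep_singleton x, ?_, ⟨x, Finset.mem_singleton_self x⟩, ?_⟩
        · intro t ht
          rw [Finset.mem_singleton] at ht
          exact ht ▸ hxc
        · have hcovx : cov G {x} = ball2 G x := by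
            simp [cov]
          have h1 : (ball2 G x \ cov G S).card
              = (ball2 G x).card - (ball2 G x ∩ cov G S).card := by
            rw [← Finset.sdiff_inter_self_left, Finset.card_sdiff_of_subset Finset.inter_subset_left]
          have h2 := card_ball2_le' (G := G) x
          rw [hcovx, Finset.card_singleton, mul_one]
          omega
      push_neg at hA
      have hreg : ∀ z, z ∉ cov G S → (ball2 G z) ∩ cov G S = ∅ := by
        apply regime
        intro z hz
        have := hA z hz
        omega
      by_cases hB : ∃ z, z ∉ cov G S ∧ (ball2 G z).card ≤ G.maxDegree ^ 2 - 1
      · -- Step B: a small uncovered ball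
        obtain ⟨x, hxc, hx1⟩ := hB
        refine ⟨{x}, oddIndep_singleton x, ?_, ⟨x, Finset.mem_singleton_self x⟩, ?_⟩
        · intro t ht
          rw [Finset.mem_singleton] at ht
          exact ht ▸ hxc
        · have hcovx : cov G {x} = ball2 G x := by
            simp [cov]
          rw [hcovx, Finset.card_singleton, mul_one]
          exact le_trans (Finset.card_le_card Finset.sdiff_subset) hx1
      push_neg at hB
      have hball : ∀ z, z ∉ cov G S → G.maxDegree ^ 2 ≤ (ball2 G z).card := by
        intro z hz
        have := hB z hz
        omega
      by_cases hC : ∃ z, z ∉ cov G S ∧ ∃ A, GoodTriple G z A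
      · -- Step C: an uncovered vertex with a good triple in its neighborhood
        obtain ⟨x, hxc, A, hGT⟩ := hC
        have hxball := hball x hxc
        have hdegx : G.degree x = G.maxDegree := degree_eq_of_big_ball hD hxball
        have hAunc : ∀ a ∈ A, a ∉ cov G S := by
          intro a ha hacov
          have hmem : a ∈ ball2 G x ∩ cov G S := Finset.mem_inter.2
            ⟨adj_mem_ball2 ((SimpleGraph.mem_neighborFinset G x a).1 (hGT.1 ha)), hacov⟩
          rw [hreg x hxc] at hmem
          exact Finset.notMem_empty a hmem
        refine ⟨A, goodTriple_oddIndep hGT, hAunc,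
          Finset.card_pos.1 (by rw [hGT.2.1]; omega), ?_⟩
        obtain ⟨a, b, c, hab, hac, hbc, hAeq⟩ := Finset.card_eq_three.1 hGT.2.1
        have hcovA : cov G A = ball2 G a ∪ (ball2 G b ∪ ball2 G c) := by
          rw [hAeq]
          simp only [cov, Finset.biUnion_insert, Finset.singleton_biUnion]
        set K : Finset V := insert x (G.neighborFinset x) with hK
        have hxnm : x ∉ G.neighborFinset x := by
          simp [SimpleGraph.mem_neighborFinset]
        have hKcard : K.card = G.maxDegree + 1 := by
          rw [hK, Finset.card_insert_of_notMem hxnm]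
          have : (G.neighborFinset x).card = G.maxDegree := hdegx
          omega
        have hKsub : ∀ e ∈ A, K ⊆ ball2 G e := by
          intro e he v hv
          have hadjxe : G.Adj x e := (SimpleGraph.mem_neighborFinset G x e).1 (hGT.1 he)
          rcases Finset.mem_insert.1 hv with h | h
          · rw [h]; exact adj_mem_ball2 hadjxe.symm
          · exact dist2_mem_ball2 hadjxe.symm ((SimpleGraph.mem_neighborFinset G x v).1 h)
        have hmemA : ∀ e, e ∈ ({a, b, c} : Finset V) → e ∈ A := fun e he => hAeq ▸ he
        have hsubC : cov G A ⊆ ball2 G a ∪ ((ball2 G b \ K) ∪ (ball2 G c \ K)) := by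
          rw [hcovA]
          intro v hv
          rcases Finset.mem_union.1 hv with h | h
          · exact Finset.mem_union_left _ h
          by_cases hvK : v ∈ K
          · exact Finset.mem_union_left _
              (hKsub a (hmemA a (by simp)) hvK)
          rcases Finset.mem_union.1 h with h' | h'
          · exact Finset.mem_union_right _
              (Finset.mem_union_left _ (Finset.mem_sdiff.2 ⟨h', hvK⟩))
          · exact Finset.mem_union_right _
              (Finset.mem_union_right _ (Finset.mem_sdiff.2 ⟨h', hvK⟩))
        have hcb : (ball2 G b \ K).card = (ball2 G b).card - K.card :=
          Finset.card_sdiff_of_subset (hKsub b (hmemA b (by simp)))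
        have hcc : (ball2 G c \ K).card = (ball2 G c).card - K.card :=
          Finset.card_sdiff_of_subset (hKsub c (hmemA c (by simp)))
        have hba := card_ball2_le' (G := G) a
        have hbb := card_ball2_le' (G := G) b
        have hbcc := card_ball2_le' (G := G) c
        have hcard1 : (cov G A \ cov G S).card ≤ (cov G A).card :=
          Finset.card_le_card Finset.sdiff_subset
        have hcard2 : (cov G A).card ≤
            (ball2 G a).card + ((ball2 G b \ K).card + (ball2 G c \ K).card) :=
          le_trans (Finset.card_le_card hsubC)
            (le_trans (Finset.card_union_le _ _)
              (Nat.add_le_add_left (Finset.card_union_le _ _) _))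
        rw [hGT.2.1]
        omega
      · -- Step D
        push_neg at hC
        obtain ⟨x, hxmem⟩ := Finset.nonempty_iff_ne_empty.2 hdone
        have hxc : x ∉ cov G S := (Finset.mem_sdiff.1 hxmem).2
        have hD3 : G.maxDegree = 3 := by
          by_contra hne
          obtain ⟨A, hGT⟩ := exists_goodTriple hD (hball x hxc) (Or.inl (by omega))
          exact hC x hxc A hGT
        have hQ3 : G.maxDegree ^ 2 = 9 := by rw [hD3]; norm_num
        have heavy : ∀ z, z ∉ cov G S → ∃ y ∈ N2 G z, 2 ≤ sig G z y := by
          intro z hz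
          by_contra hno
          push_neg at hno
          obtain ⟨A, hGT⟩ := exists_goodTriple hD (hball z hz)
            (Or.inr (fun y hy => by have := hno y hy; omega))
          exact hC z hz A hGT
        have hball9 : ∀ z, z ∉ cov G S → (ball2 G z).card = 9 := by
          intro z hz
          have h1 := hball z hz
          have h2 := card_ball2_le' (G := G) z
          by_contra hne
          have h10 : G.maxDegree ^ 2 + 1 ≤ (ball2 G z).card := by omega
          obtain ⟨y, hy, h2y⟩ := heavy z hz
          have := no_heavy_of_full hD h10 hy
          omega
        have huncb : ∀ v, v ∈ ball2 G x → v ∉ cov G S := by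
          intro v hv hc
          have hmem : v ∈ ball2 G x ∩ cov G S := Finset.mem_inter.2 ⟨hv, hc⟩
          rw [hreg x hxc] at hmem
          exact Finset.notMem_empty v hmem
        by_cases hout : ∃ y ∈ N2 G x, ∃ t, G.Adj y t ∧ t ∉ ball2 G x
        · -- pair step
          obtain ⟨y, hy, t, hyt, htout⟩ := hout
          have hyballx : y ∈ ball2 G x :=
            (Finset.mem_sdiff.1 (show y ∈ ball2 G x \ insert x (G.neighborFinset x) from hy)).1
          have hyunc : y ∉ cov G S := huncb y hyballx
          have htunc : t ∉ cov G S := by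
            intro hc
            have hmem : t ∈ ball2 G y ∩ cov G S :=
              Finset.mem_inter.2 ⟨adj_mem_ball2 hyt, hc⟩
            rw [hreg y hyunc] at hmem
            exact Finset.notMem_empty t hmem
          obtain ⟨u, hu⟩ := Finset.card_pos.1 (sig_pos hy)
          have hu' := Finset.mem_filter.1 hu
          have hyu : y ≠ u := G.ne_of_adj hu'.2
          have hxt : x ≠ t := fun h => htout (by rw [← h]; exact self_mem_ball2 x)
          refine ⟨{x, t}, oddIndep_pair htout, ?_, ⟨x, Finset.mem_insert_self x _⟩, ?_⟩
          · intro e he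
            rcases Finset.mem_insert.1 he with h | h
            · exact h ▸ hxc
            · rw [Finset.mem_singleton] at h
              exact h ▸ htunc
          · have hcovp : cov G {x, t} = ball2 G x ∪ ball2 G t := by
              simp only [cov, Finset.biUnion_insert, Finset.singleton_biUnion]
            have hOsub : ({y, u} : Finset V) ⊆ ball2 G t := by
              intro v hv
              rcases Finset.mem_insert.1 hv with h' | h'
              · rw [h']; exact adj_mem_ball2 hyt.symm
              · rw [Finset.mem_singleton] at h'
                rw [h']; exact dist2_mem_ball2 hyt.symm hu'.2
            have hsubp : ball2 G x ∪ ball2 G t ⊆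
                ball2 G x ∪ (ball2 G t \ ({y, u} : Finset V)) := by
              intro v hv
              rcases Finset.mem_union.1 hv with h | h
              · exact Finset.mem_union_left _ h
              by_cases hvO : v ∈ ({y, u} : Finset V)
              · apply Finset.mem_union_left
                rcases Finset.mem_insert.1 hvO with h' | h'
                · rw [h']; exact hyballx
                · rw [Finset.mem_singleton] at h'
                  rw [h']
                  exact adj_mem_ball2 ((SimpleGraph.mem_neighborFinset G x u).1 hu'.1)
              · exact Finset.mem_union_right _ (Finset.mem_sdiff.2 ⟨h, hvO⟩)
            have hcards : (ball2 G t \ ({y, u} : Finset V)).card = (ball2 G t).card - 2 := by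
              rw [Finset.card_sdiff_of_subset hOsub, Finset.card_pair hyu]
            have hTcard : ({x, t} : Finset V).card = 2 := Finset.card_pair hxt
            have hbx := hball9 x hxc
            have hbt := hball9 t htunc
            have hfinal : (cov G {x, t} \ cov G S).card ≤
                (ball2 G x).card + (ball2 G t \ ({y, u} : Finset V)).card := by
              calc (cov G {x, t} \ cov G S).card ≤ (cov G {x, t}).card :=
                    Finset.card_le_card Finset.sdiff_subset
                _ = (ball2 G x ∪ ball2 G t).card := by rw [hcovp]
                _ ≤ (ball2 G x ∪ (ball2 G t \ ({y, u} : Finset V))).card :=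
                    Finset.card_le_card hsubp
                _ ≤ _ := Finset.card_union_le _ _
            rw [hTcard]
            omega
        · -- closure: parity contradiction
          exfalso
          push_neg at hout
          refine parity_contradiction (G := G) (K := ball2 G x) ?_ ?_ (hball9 x hxc)
          · intro v hv w hvw
            by_cases hvx : v = x
            · subst hvx
              exact adj_mem_ball2 hvw
            by_cases hvN1 : v ∈ G.neighborFinset x
            · exact dist2_mem_ball2 ((SimpleGraph.mem_neighborFinset G x v).1 hvN1) hvw
            · have hvN2 : v ∈ N2 G x := by
                rw [N2, Finset.mem_sdiff, Finset.mem_insert]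
                exact ⟨hv, by push_neg; exact ⟨hvx, hvN1⟩⟩
              exact hout v hvN2 w hvw
          · intro v hv
            have hvunc : v ∉ cov G S := huncb v hv
            exact (degree_eq_of_big_ball hD (hball v hvunc)).trans hD3
    obtain ⟨h1, h2, h3⟩ := extend_step hS hT hfar hTne hinv hcost
    exact ih (S ∪ T) h1 h2 (by omega)

end OddProofAux


/-- If `G` is a finite simple graph on `n` vertices with maximum degree
`Δ(G) ≥ 3`, then `(Δ(G)² − 1)·αod(G) ≥ n`. -/
theorem card_le_maxDegree_sq_sub_one_mul_oddIndepNum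
    {V : Type*} [Fintype V] [DecidableEq V]
    (G : SimpleGraph V) [DecidableRel G.Adj] (hD : 3 ≤ G.maxDegree) :
    Fintype.card V ≤ (G.maxDegree ^ 2 - 1) * oddIndepNum G := by
  classical
  have hempty : IsOddIndepSet G (∅ : Finset V) := by
    constructor
    · intro u hu
      exact absurd hu (Finset.notMem_empty u)
    · intro v _
      exact Or.inl (Finset.filter_empty _)
  have hinv : (OddProofAux.cov G (∅ : Finset V)).card ≤ (G.maxDegree ^ 2 - 1) * (∅ : Finset V).card := by
    simp [OddProofAux.cov]
  obtain ⟨T, hT, hbound⟩ := OddProofAux.main_induction hD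
    (univ \ OddProofAux.cov G (∅ : Finset V)).card ∅ hempty hinv le_rfl
  have hbdd : BddAbove {k | ∃ S : Finset V, IsOddIndepSet G S ∧ S.card = k} := by
    refine ⟨Fintype.card V, fun k hk => ?_⟩
    obtain ⟨S, _, rfl⟩ := hk
    exact (Finset.card_le_univ S).trans_eq Finset.card_univ
  have hle : T.card ≤ oddIndepNum G := le_csSup hbdd ⟨T, hT, rfl⟩
  calc Fintype.card V ≤ (G.maxDegree ^ 2 - 1) * T.card := hbound
    _ ≤ (G.maxDegree ^ 2 - 1) * oddIndepNum G := Nat.mul_le_mul_left _ hle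
end
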